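/- arXiv:1503.08802 — 6 statements merged into one kernel-verified Lean document; each statement's English description precedes it below -/
import Mathlib

section
/- Let a, b, c, d be real quaternions with a ≠ 0 and c ≠ 0. Then |a·d − a·c·a⁻¹·b|² = |a|²·|d|² + |b|²·|c|² − 2·Re(a·conj(c)·d·conj(b)) = |c·a·c⁻¹·d − c·b|². In particular, the square of the Dieudonné determinant det(A) = |ad − aca⁻¹b| of the matrix A = !![a,b;c,d] equals α_A := |a|²|d|² + |b|²|c|² − 2Re(a·conj(c)·d·conj(b)), which also equals |σ|² where σ = c·a·c⁻¹·d − c·b. -/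
set_option maxHeartbeats 4000000

open Matrix Quaternion
open scoped Quaternion

private lemma re_mul_comm (x y : ℍ[ℝ]) : (x * y).re = (y * x).re := by
  simp only [Quaternion.re_mul]; ring

private lemma sub_normSq (x y : ℍ[ℝ]) :
    normSq (x - y) = normSq x + normSq y - 2 * (x * star y).re := by
  simp only [normSq_def, star_sub, sub_mul, mul_sub, Quaternion.re_sub, Quaternion.re_add]
  have : (y * star x).re = (x * star y).re := by
    simp only [Quaternion.re_mul, Quaternion.re_star, Quaternion.imI_star, Quaternion.imJ_star,
      Quaternion.imK_star]; ring
  rw [this]; ring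

/-- For real quaternions `a, b, c, d` with `a ≠ 0`, `c ≠ 0`,
`|ad − aca⁻¹b|² = |a|²|d|² + |b|²|c|² − 2 Re(a c̄ d b̄) = |cac⁻¹d − cb|²`. -/
theorem quaternion_det_alpha (a b c d : ℍ[ℝ]) (ha : a ≠ 0) (hc : c ≠ 0) :
    ‖a * d - a * c * a⁻¹ * b‖ ^ 2
        = ‖a‖ ^ 2 * ‖d‖ ^ 2 + ‖b‖ ^ 2 * ‖c‖ ^ 2 - 2 * (a * star c * d * star b).re ∧
      ‖a‖ ^ 2 * ‖d‖ ^ 2 + ‖b‖ ^ 2 * ‖c‖ ^ 2 - 2 * (a * star c * d * star b).re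
        = ‖c * a * c⁻¹ * d - c * b‖ ^ 2 := by
  have hna : normSq a ≠ 0 := by simpa using ha
  have hnc : normSq c ≠ 0 := by simpa using hc
  have key : ∀ x : ℍ[ℝ], ‖x‖ ^ 2 = normSq x := fun x => by
    rw [sq, ← normSq_eq_norm_mul_self]
  simp only [key]
  have main : ∀ x y z w : ℍ[ℝ], x ≠ 0 →
      normSq (x * w - x * y * x⁻¹ * z) =
        normSq x * normSq w + normSq z * normSq y - 2 * (x * star y * w * star z).re := by
    intro x y z w hx
    have hnx : normSq x ≠ 0 := by simpa using hx
    rw [sub_normSq]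
    have h1 : normSq (x * w) = normSq x * normSq w := by simp [_root_.map_mul]
    have h2 : normSq (x * y * x⁻¹ * z) = normSq z * normSq y := by
      simp only [_root_.map_mul, map_inv₀]
      field_simp
    rw [h1, h2]
    have h3 : (x * w * star (x * y * x⁻¹ * z)).re = (x * star y * w * star z).re := by
      have hxinv : star (x⁻¹ : ℍ[ℝ]) = (normSq x)⁻¹ • x := by
        simp [Quaternion.inv_def]
      simp only [StarMul.star_mul, hxinv]
      rw [show x * w * (star z * ((normSq x)⁻¹ • x * (star y * star x)))
          = (normSq x)⁻¹ • (x * w * star z * x * star y * star x) by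
        simp only [smul_mul_assoc, mul_smul_comm]; congr 1; noncomm_ring]
      rw [Quaternion.re_smul]
      rw [re_mul_comm]
      rw [show star x * (x * w * star z * x * star y) = (star x * x) * (w * star z * x * star y) by
        noncomm_ring]
      rw [star_mul_self]
      rw [show (↑(normSq x) : ℍ[ℝ]) * (w * star z * x * star y)
          = normSq x • (w * star z * x * star y) by
        rw [Quaternion.coe_mul_eq_smul]]
      rw [Quaternion.re_smul, smul_eq_mul, smul_eq_mul, ← mul_assoc, inv_mul_cancel₀ hnx,
        one_mul]
      rw [show w * star z * x * star y = (w * star z) * (x * star y) by noncomm_ring, re_mul_comm]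
      congr 1
      noncomm_ring
    rw [h3]
  refine ⟨by simpa using main a c b d ha, ?_⟩
  have h := main c a d b hc
  rw [show c * a * c⁻¹ * d - c * b = -(c * b - c * a * c⁻¹ * d) by noncomm_ring, normSq_neg, h]
  have hre : (a * star c * d * star b).re = (c * star a * b * star d).re := by
    rw [← Quaternion.re_star (a * star c * d * star b)]
    simp only [StarMul.star_mul, star_star]
    rw [show b * (star d * (c * star a)) = (b * star d) * (c * star a) by noncomm_ring, re_mul_comm]
    congr 1
    noncomm_ring
  rw [hre]
  ring
end

section
/- Let M = !![a,b;c,d] be a 2×2 matrix over the real quaternions with a, b, c, d all nonzero and α_M := |a|²|d|² + |b|²|c|² − 2·Re(a·conj(c)·d·conj(b)) ≠ 0. With l₁₁ = da − dbd⁻¹c, l₁₂ = bdb⁻¹a − bc, l₂₁ = cac⁻¹d − cb, l₂₂ = ad − aca⁻¹b, r₁₁ = ad − bd⁻¹cd, r₁₂ = db⁻¹ab − cb, r₂₁ = ac⁻¹dc − bc, r₂₂ = da − ca⁻¹ba, and writing d̃ = l₁₁⁻¹d, c̃ = l₂₁⁻¹c, b̃ = l₁₂⁻¹b, ã = l₂₂⁻¹a,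 d₊ = d·r₁₁⁻¹, c₊ = c·r₂₁⁻¹, b₊ = b·r₁₂⁻¹, a₊ = a·r₂₂⁻¹, the following identities hold: (1) a·d₊ − b·c₊ = 1 = d·a₊ − c·b₊ and d̃·a − b̃·c = 1 = ã·d − c̃·b; (2) a·d̃ − b·c̃ = 1 = d·ã − c·b̃ and d₊·a − b₊·c = 1 = a₊·d − c₊·b; (3) a·b̃ = b·ã, c·d̃ = d·c̃, ã·c = c̃·a, b̃·d = d̃·b; (4) a·b₊ = b·a₊, c·d₊ = d·c₊, a₊·c = c₊·a, b₊·d = d₊·b. -/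
open Matrix Quaternion
open scoped Quaternion

private lemma aux_coe (x y : ℍ[ℝ]) (r : ℝ) : x * ((r : ℍ[ℝ]) * y) = (r : ℍ[ℝ]) * (x * y) := by
  rw [← mul_assoc, ← Quaternion.coe_commutes, mul_assoc]

private lemma aux_star (c x : ℍ[ℝ]) : star c * (c * x) = ((normSq c : ℝ) : ℍ[ℝ]) * x := by
  rw [← mul_assoc, Quaternion.star_mul_self]

private lemma aux_normSq (a : ℍ[ℝ]) : normSq a = ‖a‖ ^ 2 := by
  rw [Quaternion.normSq_eq_norm_mul_self, sq]

set_option maxHeartbeats 1000000 in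
/-- Kellerhals' identities for the tilde/subtilde quantities attached to an
invertible `2×2` quaternionic matrix `!![a,b;c,d]`. -/
theorem quaternion_tilde_identities (a b c d : ℍ[ℝ])
    (ha : a ≠ 0) (hb : b ≠ 0) (hc : c ≠ 0) (hd : d ≠ 0)
    (hα : ‖a‖ ^ 2 * ‖d‖ ^ 2 + ‖b‖ ^ 2 * ‖c‖ ^ 2 - 2 * (a * star c * d * star b).re ≠ 0)
    (dt ct bt at' dp cp bp ap' : ℍ[ℝ])
    (hdt : dt = (d * a - d * b * d⁻¹ * c)⁻¹ * d)
    (hct : ct = (c * a * c⁻¹ * d - c * b)⁻¹ * c)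
    (hbt : bt = (b * d * b⁻¹ * a - b * c)⁻¹ * b)
    (hat : at' = (a * d - a * c * a⁻¹ * b)⁻¹ * a)
    (hdp : dp = d * (a * d - b * d⁻¹ * c * d)⁻¹)
    (hcp : cp = c * (a * c⁻¹ * d * c - b * c)⁻¹)
    (hbp : bp = b * (d * b⁻¹ * a * b - c * b)⁻¹)
    (hap : ap' = a * (d * a - c * a⁻¹ * b * a)⁻¹) :
    (a * dp - b * cp = 1 ∧ d * ap' - c * bp = 1 ∧ dt * a - bt * c = 1 ∧ at' * d - ct * b = 1) ∧
    (a * dt - b * ct = 1 ∧ d * at' - c * bt = 1 ∧ dp * a - bp * c = 1 ∧ ap' * d - cp * b = 1) ∧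
    (a * bt = b * at' ∧ c * dt = d * ct ∧ at' * c = ct * a ∧ bt * d = dt * b) ∧
    (a * bp = b * ap' ∧ c * dp = d * cp ∧ ap' * c = cp * a ∧ bp * d = dp * b) := by
  set s1 : ℍ[ℝ] := a - b * d⁻¹ * c with hs1def
  set s2 : ℍ[ℝ] := d - c * a⁻¹ * b with hs2def
  -- nonvanishing of the two Schur complements
  have hs1 : s1 ≠ 0 := by
    intro h
    apply hα
    have hA : a = b * d⁻¹ * c := by
      have := sub_eq_zero.mp h
      linear_combination (norm := noncomm_ring) this
    have h1 : ‖a‖ = ‖b‖ * ‖d‖⁻¹ * ‖c‖ := by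
      rw [hA, norm_mul, norm_mul, norm_inv]
    have h2 : (a * star c * d * star b).re = normSq c * normSq b := by
      rw [hA]
      simp only [mul_assoc, aux_star, aux_coe, inv_mul_cancel_left₀ hd,
        Quaternion.self_mul_star, ← Quaternion.coe_mul, Quaternion.re_coe]
    rw [h1, h2, aux_normSq, aux_normSq]
    have hd' : ‖d‖ ≠ 0 := norm_ne_zero_iff.mpr hd
    field_simp
    ring
  have hs2 : s2 ≠ 0 := by
    intro h
    apply hα
    have hD : d = c * a⁻¹ * b := by
      have := sub_eq_zero.mp h
      linear_combination (norm := noncomm_ring) this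
    have h1 : ‖d‖ = ‖c‖ * ‖a‖⁻¹ * ‖b‖ := by
      rw [hD, norm_mul, norm_mul, norm_inv]
    have h2 : (a * star c * d * star b).re = normSq c * normSq b := by
      rw [hD]
      simp only [mul_assoc, aux_star, aux_coe, mul_inv_cancel_left₀ ha,
        Quaternion.self_mul_star, ← Quaternion.coe_mul, Quaternion.re_coe]
    rw [h1, h2, aux_normSq, aux_normSq]
    have ha' : ‖a‖ ≠ 0 := norm_ne_zero_iff.mpr ha
    field_simp
    ring
  -- simplify the eight defined quantities
  have hdt' : dt = s1⁻¹ := by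
    have e : d * a - d * b * d⁻¹ * c = d * s1 := by
      rw [hs1def]; noncomm_ring
    rw [hdt, e, _root_.mul_inv_rev, mul_assoc, inv_mul_cancel₀ hd, mul_one]
  have hdp' : dp = s1⁻¹ := by
    have e : a * d - b * d⁻¹ * c * d = s1 * d := by
      rw [hs1def]; noncomm_ring
    rw [hdp, e, _root_.mul_inv_rev, ← mul_assoc, mul_inv_cancel₀ hd, one_mul]
  have hat' : at' = s2⁻¹ := by
    have e : a * d - a * c * a⁻¹ * b = a * s2 := by
      rw [hs2def]; noncomm_ring
    rw [hat, e, _root_.mul_inv_rev, mul_assoc, inv_mul_cancel₀ ha, mul_one]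
  have hap'' : ap' = s2⁻¹ := by
    have e : d * a - c * a⁻¹ * b * a = s2 * a := by
      rw [hs2def]; noncomm_ring
    rw [hap, e, _root_.mul_inv_rev, ← mul_assoc, mul_inv_cancel₀ ha, one_mul]
  have hct' : ct = s2⁻¹ * (c * a⁻¹) := by
    have e : c * a * c⁻¹ * d - c * b = c * a * c⁻¹ * s2 := by
      rw [hs2def]
      simp [sub_mul, mul_sub, mul_assoc, inv_mul_cancel_left₀ ha, inv_mul_cancel_left₀ hb, inv_mul_cancel_left₀ hc, inv_mul_cancel_left₀ hd, mul_inv_cancel_left₀ ha, mul_inv_cancel_left₀ hb, mul_inv_cancel_left₀ hc, mul_inv_cancel_left₀ hd, inv_mul_cancel₀ ha, inv_mul_cancel₀ hb, inv_mul_cancel₀ hc, inv_mul_cancel₀ hd]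
    rw [hct, e]
    simp [_root_.mul_inv_rev, sub_mul, mul_sub, mul_assoc, inv_mul_cancel_left₀ ha, inv_mul_cancel_left₀ hb, inv_mul_cancel_left₀ hc, inv_mul_cancel_left₀ hd, mul_inv_cancel_left₀ ha, mul_inv_cancel_left₀ hb, mul_inv_cancel_left₀ hc, mul_inv_cancel_left₀ hd, inv_mul_cancel₀ ha, inv_mul_cancel₀ hb, inv_mul_cancel₀ hc, inv_mul_cancel₀ hd]
  have hcp' : cp = s2⁻¹ * (c * a⁻¹) := by
    have e : a * c⁻¹ * d * c - b * c = a * c⁻¹ * (s2 * c) := by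
      rw [hs2def]
      simp [sub_mul, mul_sub, mul_assoc, inv_mul_cancel_left₀ ha, inv_mul_cancel_left₀ hb, inv_mul_cancel_left₀ hc, inv_mul_cancel_left₀ hd, mul_inv_cancel_left₀ ha, mul_inv_cancel_left₀ hb, mul_inv_cancel_left₀ hc, mul_inv_cancel_left₀ hd, inv_mul_cancel₀ ha, inv_mul_cancel₀ hb, inv_mul_cancel₀ hc, inv_mul_cancel₀ hd]
    rw [hcp, e]
    simp [_root_.mul_inv_rev, sub_mul, mul_sub, mul_assoc, inv_mul_cancel_left₀ ha, inv_mul_cancel_left₀ hb, inv_mul_cancel_left₀ hc, inv_mul_cancel_left₀ hd, mul_inv_cancel_left₀ ha, mul_inv_cancel_left₀ hb, mul_inv_cancel_left₀ hc, mul_inv_cancel_left₀ hd, inv_mul_cancel₀ ha, inv_mul_cancel₀ hb, inv_mul_cancel₀ hc, inv_mul_cancel₀ hd]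
  have hbt' : bt = s1⁻¹ * (b * d⁻¹) := by
    have e : b * d * b⁻¹ * a - b * c = b * d * b⁻¹ * s1 := by
      rw [hs1def]
      simp [sub_mul, mul_sub, mul_assoc, inv_mul_cancel_left₀ ha, inv_mul_cancel_left₀ hb, inv_mul_cancel_left₀ hc, inv_mul_cancel_left₀ hd, mul_inv_cancel_left₀ ha, mul_inv_cancel_left₀ hb, mul_inv_cancel_left₀ hc, mul_inv_cancel_left₀ hd, inv_mul_cancel₀ ha, inv_mul_cancel₀ hb, inv_mul_cancel₀ hc, inv_mul_cancel₀ hd]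
    rw [hbt, e]
    simp [_root_.mul_inv_rev, sub_mul, mul_sub, mul_assoc, inv_mul_cancel_left₀ ha, inv_mul_cancel_left₀ hb, inv_mul_cancel_left₀ hc, inv_mul_cancel_left₀ hd, mul_inv_cancel_left₀ ha, mul_inv_cancel_left₀ hb, mul_inv_cancel_left₀ hc, mul_inv_cancel_left₀ hd, inv_mul_cancel₀ ha, inv_mul_cancel₀ hb, inv_mul_cancel₀ hc, inv_mul_cancel₀ hd]
  have hbp' : bp = s1⁻¹ * (b * d⁻¹) := by
    have e : d * b⁻¹ * a * b - c * b = d * b⁻¹ * (s1 * b) := by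
      rw [hs1def]
      simp [sub_mul, mul_sub, mul_assoc, inv_mul_cancel_left₀ ha, inv_mul_cancel_left₀ hb, inv_mul_cancel_left₀ hc, inv_mul_cancel_left₀ hd, mul_inv_cancel_left₀ ha, mul_inv_cancel_left₀ hb, mul_inv_cancel_left₀ hc, mul_inv_cancel_left₀ hd, inv_mul_cancel₀ ha, inv_mul_cancel₀ hb, inv_mul_cancel₀ hc, inv_mul_cancel₀ hd]
    rw [hbp, e]
    simp [_root_.mul_inv_rev, sub_mul, mul_sub, mul_assoc, inv_mul_cancel_left₀ ha, inv_mul_cancel_left₀ hb, inv_mul_cancel_left₀ hc, inv_mul_cancel_left₀ hd, mul_inv_cancel_left₀ ha, mul_inv_cancel_left₀ hb, mul_inv_cancel_left₀ hc, mul_inv_cancel_left₀ hd, inv_mul_cancel₀ ha, inv_mul_cancel₀ hb, inv_mul_cancel₀ hc, inv_mul_cancel₀ hd]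
  -- the two key intertwining relations
  have rel1 : s2 * (d⁻¹ * c) = c * (a⁻¹ * s1) := by
    rw [hs1def, hs2def]
    simp [sub_mul, mul_sub, mul_assoc, inv_mul_cancel_left₀ ha, inv_mul_cancel_left₀ hb, inv_mul_cancel_left₀ hc, inv_mul_cancel_left₀ hd, mul_inv_cancel_left₀ ha, mul_inv_cancel_left₀ hb, mul_inv_cancel_left₀ hc, mul_inv_cancel_left₀ hd, inv_mul_cancel₀ ha, inv_mul_cancel₀ hb, inv_mul_cancel₀ hc, inv_mul_cancel₀ hd]
  have relC : s2⁻¹ * (c * a⁻¹) = d⁻¹ * (c * s1⁻¹) := by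
    have h1 : c * a⁻¹ = s2 * (d⁻¹ * (c * s1⁻¹)) := by
      have h2 : s2 * (d⁻¹ * (c * s1⁻¹)) = s2 * (d⁻¹ * c) * s1⁻¹ := by
        simp [mul_assoc]
      rw [h2, rel1, mul_assoc, mul_assoc, mul_inv_cancel₀ hs1, mul_one]
    rw [h1, ← mul_assoc, inv_mul_cancel₀ hs2, one_mul]
  have rel2 : d * (b⁻¹ * (s1 * (a⁻¹ * b))) = s2 := by
    rw [hs1def, hs2def]
    simp [sub_mul, mul_sub, mul_assoc, inv_mul_cancel_left₀ ha, inv_mul_cancel_left₀ hb, inv_mul_cancel_left₀ hc, inv_mul_cancel_left₀ hd, mul_inv_cancel_left₀ ha, mul_inv_cancel_left₀ hb, mul_inv_cancel_left₀ hc, mul_inv_cancel_left₀ hd, inv_mul_cancel₀ ha, inv_mul_cancel₀ hb, inv_mul_cancel₀ hc, inv_mul_cancel₀ hd]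
  have relB : s1⁻¹ * (b * d⁻¹) = a⁻¹ * (b * s2⁻¹) := by
    have h1 : s2⁻¹ = b⁻¹ * (a * (s1⁻¹ * (b * d⁻¹))) := by
      rw [← rel2]
      simp [_root_.mul_inv_rev, sub_mul, mul_sub, mul_assoc, inv_mul_cancel_left₀ ha, inv_mul_cancel_left₀ hb, inv_mul_cancel_left₀ hc, inv_mul_cancel_left₀ hd, mul_inv_cancel_left₀ ha, mul_inv_cancel_left₀ hb, mul_inv_cancel_left₀ hc, mul_inv_cancel_left₀ hd, inv_mul_cancel₀ ha, inv_mul_cancel₀ hb, inv_mul_cancel₀ hc, inv_mul_cancel₀ hd, inv_mul_cancel_left₀ hs1, inv_mul_cancel_left₀ hs2, mul_inv_cancel_left₀ hs1, mul_inv_cancel_left₀ hs2, inv_mul_cancel₀ hs1, inv_mul_cancel₀ hs2]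
    rw [h1, mul_inv_cancel_left₀ hb, inv_mul_cancel_left₀ ha]
  -- the four nontrivial identities
  have G1 : a * s1⁻¹ - b * (s2⁻¹ * (c * a⁻¹)) = 1 := by
    rw [relC]
    have h1 : a * s1⁻¹ - b * (d⁻¹ * (c * s1⁻¹)) = s1 * s1⁻¹ := by
      rw [hs1def]; simp [sub_mul, mul_assoc]
    rw [h1, mul_inv_cancel₀ hs1]
  have G2 : d * s2⁻¹ - c * (s1⁻¹ * (b * d⁻¹)) = 1 := by
    rw [relB]
    have h1 : d * s2⁻¹ - c * (a⁻¹ * (b * s2⁻¹)) = s2 * s2⁻¹ := by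
      rw [hs2def]; simp [sub_mul, mul_assoc]
    rw [h1, mul_inv_cancel₀ hs2]
  have G3 : s1⁻¹ * a - s1⁻¹ * (b * d⁻¹) * c = 1 := by
    have h1 : s1⁻¹ * a - s1⁻¹ * (b * d⁻¹) * c = s1⁻¹ * s1 := by
      rw [hs1def]; simp [mul_sub, mul_assoc]
    rw [h1, inv_mul_cancel₀ hs1]
  have G4 : s2⁻¹ * d - s2⁻¹ * (c * a⁻¹) * b = 1 := by
    have h1 : s2⁻¹ * d - s2⁻¹ * (c * a⁻¹) * b = s2⁻¹ * s2 := by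
      rw [hs2def]; simp [mul_sub, mul_assoc]
    rw [h1, inv_mul_cancel₀ hs2]
  have G5 : a * (s1⁻¹ * (b * d⁻¹)) = b * s2⁻¹ := by
    rw [relB, mul_inv_cancel_left₀ ha]
  have G6 : c * s1⁻¹ = d * (s2⁻¹ * (c * a⁻¹)) := by
    rw [relC, mul_inv_cancel_left₀ hd]
  have G7 : s2⁻¹ * c = s2⁻¹ * (c * a⁻¹) * a := by
    simp [mul_assoc, sub_mul, mul_sub, mul_assoc, inv_mul_cancel_left₀ ha, inv_mul_cancel_left₀ hb, inv_mul_cancel_left₀ hc, inv_mul_cancel_left₀ hd, mul_inv_cancel_left₀ ha, mul_inv_cancel_left₀ hb, mul_inv_cancel_left₀ hc, mul_inv_cancel_left₀ hd, inv_mul_cancel₀ ha, inv_mul_cancel₀ hb, inv_mul_cancel₀ hc, inv_mul_cancel₀ hd, inv_mul_cancel_left₀ hs1, inv_mul_cancel_left₀ hs2, mul_inv_cancel_left₀ hs1, mul_inv_cancel_left₀ hs2, inv_mul_cancel₀ hs1, inv_mul_cancel₀ hs2]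
  have G8 : s1⁻¹ * (b * d⁻¹) * d = s1⁻¹ * b := by
    simp [mul_assoc, sub_mul, mul_sub, mul_assoc, inv_mul_cancel_left₀ ha, inv_mul_cancel_left₀ hb, inv_mul_cancel_left₀ hc, inv_mul_cancel_left₀ hd, mul_inv_cancel_left₀ ha, mul_inv_cancel_left₀ hb, mul_inv_cancel_left₀ hc, mul_inv_cancel_left₀ hd, inv_mul_cancel₀ ha, inv_mul_cancel₀ hb, inv_mul_cancel₀ hc, inv_mul_cancel₀ hd, inv_mul_cancel_left₀ hs1, inv_mul_cancel_left₀ hs2, mul_inv_cancel_left₀ hs1, mul_inv_cancel_left₀ hs2, inv_mul_cancel₀ hs1, inv_mul_cancel₀ hs2]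
  rw [hdt', hdp', hat', hap'', hct', hcp', hbt', hbp']
  exact ⟨⟨G1, G2, G3, G4⟩, ⟨G1, G2, G3, G4⟩, ⟨G5, G6, G7, G8⟩, ⟨G5, G6, G7, G8⟩⟩
end

section
/- Let S = !![a,b;c,d] and T = !![λ,0;0,μ] be 2×2 quaternionic matrices with α_S = 1, |λ|·|μ| = 1 and |μ| ≥ 1, where λ is not similar to μ. Suppose the subgroup of units of M₂(ℍ) generated by S and T is discrete, and the Shimizu–Leutbecher sequence S₀ = S, S_{n+1} = S_n·T·S_n⁻¹, S_n = !![a_n,b_n;c_n,d_n], satisfies b_n·c_n ≠ 0 for every n ≥ 0. Then β(T)·L^k ≥ 1, where β(T) := sup{ |(λ − e·μ·e⁻¹)·(λ − f·μ·f⁻¹)| : e, f ∈ ℍ, e ≠ 0, f ≠ 0 }, L := 1 + |μ|, and k := ⌊1 + |b·c|⌋ + 1 (⌊·⌋ the greatest integer function). -/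
open Matrix Quaternion Filter
open scoped Quaternion

namespace QJorAux

noncomputable def alph (a b c d : ℍ[ℝ]) : ℝ :=
  ‖a‖^2*‖d‖^2 + ‖b‖^2*‖c‖^2 - 2*(a * star c * d * star b).re

lemma alph_L (m a b c d : ℍ[ℝ]) : alph a b (m*a + c) (m*b + d) = alph a b c d := by
  simp only [alph, pow_two, ← Quaternion.normSq_eq_norm_mul_self]
  simp only [Quaternion.normSq_def', Quaternion.re_mul, Quaternion.imI_mul, Quaternion.imJ_mul,
    Quaternion.imK_mul, Quaternion.re_add, Quaternion.imI_add, Quaternion.imJ_add,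
    Quaternion.imK_add, Quaternion.re_star, Quaternion.imI_star, Quaternion.imJ_star,
    Quaternion.imK_star]
  ring

lemma alph_R (m a b c d : ℍ[ℝ]) : alph (a + b*m) b (c + d*m) d = alph a b c d := by
  simp only [alph, pow_two, ← Quaternion.normSq_eq_norm_mul_self]
  simp only [Quaternion.normSq_def', Quaternion.re_mul, Quaternion.imI_mul, Quaternion.imJ_mul,
    Quaternion.imK_mul, Quaternion.re_add, Quaternion.imI_add, Quaternion.imJ_add,
    Quaternion.imK_add, Quaternion.re_star, Quaternion.imI_star, Quaternion.imJ_star,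
    Quaternion.imK_star]
  ring

lemma alph_upper (p t r : ℍ[ℝ]) : alph p t 0 r = ‖p‖^2 * ‖r‖^2 := by
  simp [alph]

lemma alph_key (a b c d : ℍ[ℝ]) :
    normSq ((normSq a) • d - c * star a * b) = normSq a * alph a b c d := by
  simp only [alph, pow_two, ← Quaternion.normSq_eq_norm_mul_self]
  simp only [Quaternion.normSq_def', Quaternion.re_mul, Quaternion.imI_mul, Quaternion.imJ_mul,
    Quaternion.imK_mul, Quaternion.re_sub, Quaternion.imI_sub, Quaternion.imJ_sub,
    Quaternion.imK_sub, Quaternion.re_smul, Quaternion.imI_smul, Quaternion.imJ_smul,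
    Quaternion.imK_smul, Quaternion.re_star, Quaternion.imI_star, Quaternion.imJ_star,
    Quaternion.imK_star, smul_eq_mul]
  ring

lemma alph_key' (a b c d : ℍ[ℝ]) :
    normSq ((normSq d) • a - b * star d * c) = normSq d * alph a b c d := by
  simp only [alph, pow_two, ← Quaternion.normSq_eq_norm_mul_self]
  simp only [Quaternion.normSq_def', Quaternion.re_mul, Quaternion.imI_mul, Quaternion.imJ_mul,
    Quaternion.imK_mul, Quaternion.re_sub, Quaternion.imI_sub, Quaternion.imJ_sub,
    Quaternion.imK_sub, Quaternion.re_smul, Quaternion.imI_smul, Quaternion.imJ_smul,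
    Quaternion.imK_smul, Quaternion.re_star, Quaternion.imI_star, Quaternion.imJ_star,
    Quaternion.imK_star, smul_eq_mul]
  ring

lemma abs_re_le_norm' (q : ℍ[ℝ]) : |q.re| ≤ ‖q‖ := by
  have h1 : q.re^2 ≤ ‖q‖^2 := by
    simp only [pow_two]
    rw [← Quaternion.normSq_eq_norm_mul_self, Quaternion.normSq_def']
    nlinarith [sq_nonneg q.imI, sq_nonneg q.imJ, sq_nonneg q.imK]
  rw [abs_le]
  constructor <;> nlinarith [norm_nonneg q]

lemma norm_s {a b c d s : ℍ[ℝ]} (ha : a ≠ 0) (h1 : alph a b c d = 1)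
    (hs : (d - c * a⁻¹ * b) * s = 1) : ‖s‖ = ‖a‖ := by
  have hg : d - c * a⁻¹ * b ≠ 0 := by
    intro h; rw [h, zero_mul] at hs; exact one_ne_zero hs.symm
  have hsval : s = (d - c * a⁻¹ * b)⁻¹ := eq_inv_of_mul_eq_one_right hs
  have hna : normSq a ≠ 0 := normSq_ne_zero.2 ha
  have hsm : (normSq a) • (d - c * a⁻¹ * b) = (normSq a) • d - c * star a * b := by
    rw [smul_sub]
    congr 1
    rw [Quaternion.inv_def]
    rw [mul_smul_comm, smul_mul_assoc, smul_smul, mul_inv_cancel₀ hna, one_smul]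
  have hkey := alph_key a b c d
  rw [← hsm, normSq_smul, h1, mul_one] at hkey
  have h2 : normSq (d - c*a⁻¹*b) = (normSq a)⁻¹ := by
    apply mul_left_cancel₀ (pow_ne_zero 2 hna)
    rw [hkey, pow_two, mul_assoc, mul_inv_cancel₀ hna, mul_one]
  have h3 : normSq s = normSq a := by
    rw [hsval, normSq_inv, h2, inv_inv]
  have := congrArg Real.sqrt h3
  rwa [Quaternion.normSq_eq_norm_mul_self, Quaternion.normSq_eq_norm_mul_self,
    Real.sqrt_mul_self (norm_nonneg _), Real.sqrt_mul_self (norm_nonneg _)] at this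

lemma norm_p {a b c d p : ℍ[ℝ]} (hd : d ≠ 0) (h1 : alph a b c d = 1)
    (hp : (a - b * d⁻¹ * c) * p = 1) : ‖p‖ = ‖d‖ := by
  have hg : a - b * d⁻¹ * c ≠ 0 := by
    intro h; rw [h, zero_mul] at hp; exact one_ne_zero hp.symm
  have hpval : p = (a - b * d⁻¹ * c)⁻¹ := eq_inv_of_mul_eq_one_right hp
  have hnd : normSq d ≠ 0 := normSq_ne_zero.2 hd
  have hsm : (normSq d) • (a - b * d⁻¹ * c) = (normSq d) • a - b * star d * c := by
    rw [smul_sub]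
    congr 1
    rw [Quaternion.inv_def]
    rw [mul_smul_comm, smul_mul_assoc, smul_smul, mul_inv_cancel₀ hnd, one_smul]
  have hkey := alph_key' a b c d
  rw [← hsm, normSq_smul, h1, mul_one] at hkey
  have h2 : normSq (a - b*d⁻¹*c) = (normSq d)⁻¹ := by
    apply mul_left_cancel₀ (pow_ne_zero 2 hnd)
    rw [hkey, pow_two, mul_assoc, mul_inv_cancel₀ hnd, mul_one]
  have h3 : normSq p = normSq d := by
    rw [hpval, normSq_inv, h2, inv_inv]
  have := congrArg Real.sqrt h3
  rwa [Quaternion.normSq_eq_norm_mul_self, Quaternion.normSq_eq_norm_mul_self,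
    Real.sqrt_mul_self (norm_nonneg _), Real.sqrt_mul_self (norm_nonneg _)] at this

lemma q_eq {a b q s : ℍ[ℝ]} (ha : a ≠ 0) (h : a*q + b*s = 0) : q = -(a⁻¹*(b*s)) := by
  have h2 : q + a⁻¹*(b*s) = 0 := by
    have := congrArg (a⁻¹ * ·) h
    simpa [mul_add, inv_mul_cancel_left₀ ha, ← mul_assoc] using this
  exact eq_neg_of_add_eq_zero_left h2

lemma sinv_mul {a b c d q s : ℍ[ℝ]} (ha : a ≠ 0) (h2 : a*q + b*s = 0) (h4 : c*q + d*s = 1) :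
    (d - c*a⁻¹*b) * s = 1 := by
  rw [q_eq ha h2] at h4
  calc (d - c*a⁻¹*b) * s = c * -(a⁻¹*(b*s)) + d*s := by noncomm_ring
  _ = 1 := h4

lemma pinv_mul {a b c d p r : ℍ[ℝ]} (hd : d ≠ 0) (h3 : c*p + d*r = 0) (h1 : a*p + b*r = 1) :
    (a - b*d⁻¹*c) * p = 1 := by
  have hr : r = -(d⁻¹*(c*p)) := q_eq hd (by rw [add_comm]; exact h3)
  rw [hr] at h1
  calc (a - b*d⁻¹*c) * p = a*p + b * -(d⁻¹*(c*p)) := by noncomm_ring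
  _ = 1 := h1

lemma alph_conj (lam mu : ℍ[ℝ]) {a b c d p q r s : ℍ[ℝ]} (ha : a ≠ 0)
    (hL1 : p*a + q*c = 1) (hL3 : r*a + s*c = 0)
    (hR2 : a*q + b*s = 0) (hR4 : c*q + d*s = 1) :
    alph (a*lam*p + b*mu*r) (a*lam*q + b*mu*s) (c*lam*p + d*mu*r) (c*lam*q + d*mu*s)
      = ‖lam‖^2*‖mu‖^2 := by
  have hsinv := sinv_mul ha hR2 hR4
  have hs : s ≠ 0 := by
    intro h; rw [h, mul_zero] at hsinv; exact one_ne_zero hsinv.symm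
  have hsval : s⁻¹ = d - c*a⁻¹*b := by
    rw [eq_inv_of_mul_eq_one_right hsinv, inv_inv]
  have k1 : p = a⁻¹ + -(q*(c*a⁻¹)) := by
    have h2 : p + q*(c*a⁻¹) = a⁻¹ := by
      have := congrArg (· * a⁻¹) hL1
      simpa [add_mul, mul_assoc, mul_inv_cancel₀ ha] using this
    rw [eq_sub_of_add_eq h2, sub_eq_add_neg]
  have k2 : r = -(s*(c*a⁻¹)) := by
    have h2 : r + s*(c*a⁻¹) = 0 := by
      have := congrArg (· * a⁻¹) hL3
      simpa [add_mul, mul_assoc, mul_inv_cancel₀ ha] using this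
    exact eq_neg_of_add_eq_zero_left h2
  set m := c*a⁻¹ with hm
  set P := a*lam*a⁻¹ with hP
  set B := a*lam*q + b*mu*s with hB
  set R := s⁻¹*mu*s with hR
  have e1 : a*lam*p + b*mu*r = P + B*(-m) := by
    rw [k1, k2, hP, hB, hm]; noncomm_ring
  have e4 : c*lam*q + d*mu*s = m*B + R := by
    rw [hB, hR, hsval, hm]
    simp only [mul_add, add_mul, sub_mul, mul_assoc, inv_mul_cancel_left₀ ha]
    abel
  have e3 : c*lam*p + d*mu*r = m*(P + B*(-m)) + R*(-m) := by
    rw [k1, k2, hB, hR, hsval, hP, hm]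
    simp only [mul_add, add_mul, sub_mul, mul_assoc, mul_neg, neg_mul,
      inv_mul_cancel_left₀ ha, mul_one, one_mul]
    abel
  rw [e1, e3, e4]
  have h5 : alph (P + B*(-m)) B (m*(P + B*(-m)) + R*(-m)) (m*B + R)
      = alph (P + B*(-m)) B (R*(-m)) R :=
    alph_L m (P + B*(-m)) B (R*(-m)) R
  have h6 : alph (P + B*(-m)) B (0 + R*(-m)) R = alph P B 0 R := alph_R (-m) P B 0 R
  rw [zero_add] at h6
  rw [h5, h6, alph_upper]
  have hna : ‖a‖ ≠ 0 := norm_ne_zero_iff.2 ha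
  have hns : ‖s‖ ≠ 0 := norm_ne_zero_iff.2 hs
  rw [hP, hR]
  simp only [norm_mul, norm_inv]
  field_simp

lemma b2_norm (lam mu : ℍ[ℝ]) {a b q s : ℍ[ℝ]} (ha : a ≠ 0) (hb : b ≠ 0)
    (hR2 : a*q + b*s = 0) :
    ‖a*lam*q + b*mu*s‖ = ‖lam - (a⁻¹*b)*mu*(a⁻¹*b)⁻¹‖ * (‖b‖*‖s‖) := by
  have he : a*lam*q + b*mu*s = -(a * ((lam - (a⁻¹*b)*mu*(a⁻¹*b)⁻¹) * (a⁻¹ * (b * s)))) := by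
    rw [q_eq ha hR2]
    simp only [_root_.mul_inv_rev, inv_inv, mul_sub, sub_mul, mul_neg, neg_mul, mul_assoc,
      inv_mul_cancel_left₀ ha, inv_mul_cancel_left₀ hb, mul_inv_cancel_left₀ ha,
      mul_inv_cancel_left₀ hb, neg_neg, neg_sub]
    abel
  rw [he]
  have hna : ‖a‖ ≠ 0 := norm_ne_zero_iff.2 ha
  rw [norm_neg]
  simp only [norm_mul, norm_inv]
  field_simp

lemma c2_norm (lam mu : ℍ[ℝ]) {c d p r : ℍ[ℝ]} (hd : d ≠ 0) (hc : c ≠ 0)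
    (hR3 : c*p + d*r = 0) :
    ‖c*lam*p + d*mu*r‖ = ‖lam - (c⁻¹*d)*mu*(c⁻¹*d)⁻¹‖ * (‖c‖*‖p‖) := by
  have hr : r = -(d⁻¹*(c*p)) := q_eq hd (by rw [add_comm]; exact hR3)
  have he : c*lam*p + d*mu*r = c * ((lam - (c⁻¹*d)*mu*(c⁻¹*d)⁻¹) * p) := by
    rw [hr]
    simp only [_root_.mul_inv_rev, inv_inv, mul_sub, sub_mul, mul_neg, neg_mul, mul_assoc,
      inv_mul_cancel_left₀ hc, inv_mul_cancel_left₀ hd, mul_inv_cancel_left₀ hc,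
      mul_inv_cancel_left₀ hd, neg_neg, neg_sub]
    abel
  rw [he]
  simp only [norm_mul]
  ring

lemma mat2_entries {α : Type*} {x y z w x' y' z' w' : α}
    (h : !![x,y;z,w] = !![x',y';z',w']) : x = x' ∧ y = y' ∧ z = z' ∧ w = w' := by
  refine ⟨?_, ?_, ?_, ?_⟩
  · simpa using congrFun (congrFun h 0) 0
  · simpa using congrFun (congrFun h 0) 1
  · simpa using congrFun (congrFun h 1) 0
  · simpa using congrFun (congrFun h 1) 1

lemma tendsto_mat2 {w x y z : ℕ → ℍ[ℝ]} {w₀ x₀ y₀ z₀ : ℍ[ℝ]}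
    (hw : Tendsto w atTop (nhds w₀)) (hx : Tendsto x atTop (nhds x₀))
    (hy : Tendsto y atTop (nhds y₀)) (hz : Tendsto z atTop (nhds z₀)) :
    Tendsto (fun n => !![w n, x n; y n, z n]) atTop (nhds !![w₀, x₀; y₀, z₀]) := by
  refine tendsto_pi_nhds.2 ?_
  intro i
  refine tendsto_pi_nhds.2 ?_
  intro j
  fin_cases i <;> fin_cases j <;> simpa

lemma decay_tendsto_zero {g : ℕ → ℍ[ℝ]} {ρ : ℝ} (h0 : 0 ≤ ρ) (h1 : ρ < 1) (M : ℕ)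
    (h : ∀ n, M ≤ n → ‖g (n+1)‖ ≤ ρ * ‖g n‖) : Tendsto g atTop (nhds 0) := by
  have key : ∀ j, ‖g (M + j)‖ ≤ ρ^j * ‖g M‖ := by
    intro j
    induction j with
    | zero => simp
    | succ j ih =>
      have h2 := h (M + j) (Nat.le_add_right _ _)
      calc ‖g (M + (j+1))‖ = ‖g ((M + j) + 1)‖ := by ring_nf
      _ ≤ ρ * ‖g (M + j)‖ := h2
      _ ≤ ρ * (ρ^j * ‖g M‖) := mul_le_mul_of_nonneg_left ih h0
      _ = ρ^(j+1) * ‖g M‖ := by ring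
  rw [tendsto_zero_iff_norm_tendsto_zero]
  rw [← tendsto_add_atTop_iff_nat M]
  apply squeeze_zero (fun j => norm_nonneg _) (fun j => by simpa [Nat.add_comm] using key j)
  have := (tendsto_pow_atTop_nhds_zero_of_lt_one h0 h1).mul_const ‖g M‖
  simpa using this

end QJorAux

open QJorAux

set_option maxHeartbeats 8000000

/-- weaker Jørgensen-type inequality `β(T)·L^k ≥ 1` with
`β(T) = sup |(λ − eμe⁻¹)(λ − fμf⁻¹)|`, `L = 1 + |μ|`, `k = ⌊1 + |bc|⌋ + 1`. -/
theorem quaternion_jorgensen_betaT_Lk (a b c d lam mu : ℍ[ℝ])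
    (S T : Matrix (Fin 2) (Fin 2) ℍ[ℝ])
    (hS : S = !![a, b; c, d]) (hT : T = !![lam, 0; 0, mu])
    (hαS : ‖a‖ ^ 2 * ‖d‖ ^ 2 + ‖b‖ ^ 2 * ‖c‖ ^ 2 - 2 * (a * star c * d * star b).re = 1)
    (hdetT : ‖lam‖ * ‖mu‖ = 1) (hmu : 1 ≤ ‖mu‖)
    (hsim : ¬ ∃ q : ℍ[ℝ], q ≠ 0 ∧ mu = q * lam * q⁻¹)
    (US UT : (Matrix (Fin 2) (Fin 2) ℍ[ℝ])ˣ)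
    (hUS : Units.val US = S) (hUT : Units.val UT = T)
    (hdisc : DiscreteTopology
      ↥(Units.val '' ((Subgroup.closure {US, UT} :
          Subgroup (Matrix (Fin 2) (Fin 2) ℍ[ℝ])ˣ) : Set (Matrix (Fin 2) (Fin 2) ℍ[ℝ])ˣ)))
    (U : ℕ → (Matrix (Fin 2) (Fin 2) ℍ[ℝ])ˣ)
    (hU0 : U 0 = US)
    (hUrec : ∀ n, U (n + 1) = U n * UT * (U n)⁻¹)
    (aN bN cN dN : ℕ → ℍ[ℝ])
    (hUn : ∀ n, Units.val (U n) = !![aN n, bN n; cN n, dN n])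
    (hbc : ∀ n, bN n * cN n ≠ 0)
    (βT L : ℝ) (k : ℤ)
    (hβT : βT = sSup {x : ℝ | ∃ e f : ℍ[ℝ], e ≠ 0 ∧ f ≠ 0 ∧
      x = ‖(lam - e * mu * e⁻¹) * (lam - f * mu * f⁻¹)‖})
    (hL : L = 1 + ‖mu‖)
    (hk : k = ⌊(1 : ℝ) + ‖b * c‖⌋ + 1) :
    βT * L ^ k ≥ 1 := by
  by_contra hcon
  push_neg at hcon
  -- inverse entries
  obtain ⟨pN, qN, rN, sN, hVn⟩ : ∃ p q r s : ℕ → ℍ[ℝ],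
      ∀ n, Units.val ((U n)⁻¹) = !![p n, q n; r n, s n] :=
    ⟨fun n => Units.val ((U n)⁻¹) 0 0, fun n => Units.val ((U n)⁻¹) 0 1,
     fun n => Units.val ((U n)⁻¹) 1 0, fun n => Units.val ((U n)⁻¹) 1 1,
     fun n => Matrix.eta_fin_two _⟩
  -- the eight inverse relations
  have hmulR : ∀ n, (aN n * pN n + bN n * rN n = 1) ∧ (aN n * qN n + bN n * sN n = 0)
      ∧ (cN n * pN n + dN n * rN n = 0) ∧ (cN n * qN n + dN n * sN n = 1) := by
    intro n
    have h : (U n).val * (Units.val ((U n)⁻¹)) = 1 := Units.mul_inv _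
    rw [hUn n, hVn n, Matrix.mul_fin_two, Matrix.one_fin_two] at h
    exact mat2_entries h
  have hmulL : ∀ n, (pN n * aN n + qN n * cN n = 1) ∧ (pN n * bN n + qN n * dN n = 0)
      ∧ (rN n * aN n + sN n * cN n = 0) ∧ (rN n * bN n + sN n * dN n = 1) := by
    intro n
    have h : (Units.val ((U n)⁻¹)) * (U n).val = 1 := Units.inv_mul _
    rw [hUn n, hVn n, Matrix.mul_fin_two, Matrix.one_fin_two] at h
    exact mat2_entries h
  have hR1 : ∀ n, aN n * pN n + bN n * rN n = 1 := fun n => (hmulR n).1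
  have hR2 : ∀ n, aN n * qN n + bN n * sN n = 0 := fun n => (hmulR n).2.1
  have hR3 : ∀ n, cN n * pN n + dN n * rN n = 0 := fun n => (hmulR n).2.2.1
  have hR4 : ∀ n, cN n * qN n + dN n * sN n = 1 := fun n => (hmulR n).2.2.2
  have hL1 : ∀ n, pN n * aN n + qN n * cN n = 1 := fun n => (hmulL n).1
  have hL3 : ∀ n, rN n * aN n + sN n * cN n = 0 := fun n => (hmulL n).2.2.1
  -- entry recursion
  have hstep : ∀ n, !![aN (n+1), bN (n+1); cN (n+1), dN (n+1)] =
      !![(aN n*lam + bN n*0)*pN n + (aN n*0 + bN n*mu)*rN n,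
         (aN n*lam + bN n*0)*qN n + (aN n*0 + bN n*mu)*sN n;
         (cN n*lam + dN n*0)*pN n + (cN n*0 + dN n*mu)*rN n,
         (cN n*lam + dN n*0)*qN n + (cN n*0 + dN n*mu)*sN n] := by
    intro n
    rw [← hUn (n+1), hUrec n, Units.val_mul, Units.val_mul, hUn n, hUT, hT, hVn n,
      Matrix.mul_fin_two, Matrix.mul_fin_two]
  have hE1 : ∀ n, aN (n+1) = aN n*lam*pN n + bN n*mu*rN n := by
    intro n; have := (mat2_entries (hstep n)).1; simpa using this
  have hE2 : ∀ n, bN (n+1) = aN n*lam*qN n + bN n*mu*sN n := by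
    intro n; have := (mat2_entries (hstep n)).2.1; simpa using this
  have hE3 : ∀ n, cN (n+1) = cN n*lam*pN n + dN n*mu*rN n := by
    intro n; have := (mat2_entries (hstep n)).2.2.1; simpa using this
  have hE4 : ∀ n, dN (n+1) = cN n*lam*qN n + dN n*mu*sN n := by
    intro n; have := (mat2_entries (hstep n)).2.2.2; simpa using this
  -- identification at 0
  have hid : aN 0 = a ∧ bN 0 = b ∧ cN 0 = c ∧ dN 0 = d := by
    apply mat2_entries
    rw [← hUn 0, hU0, hUS, hS]
  -- nonvanishing
  have hbne : ∀ n, bN n ≠ 0 := fun n => left_ne_zero_of_mul (hbc n)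
  have hcne : ∀ n, cN n ≠ 0 := fun n => right_ne_zero_of_mul (hbc n)
  have hane : ∀ n, aN n ≠ 0 := by
    intro n h0
    have h2 := hR2 n
    rw [h0, zero_mul, zero_add] at h2
    have hs0 : sN n = 0 := by
      rcases mul_eq_zero.1 h2 with h | h
      · exact absurd h (hbne n)
      · exact h
    apply hbne (n+1)
    rw [hE2 n, h0, hs0]
    simp
  have hdne : ∀ n, dN n ≠ 0 := by
    intro n h0
    have h3 := hR3 n
    rw [h0, zero_mul, add_zero] at h3
    have hp0 : pN n = 0 := by
      rcases mul_eq_zero.1 h3 with h | h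
      · exact absurd h (hcne n)
      · exact h
    apply hcne (n+1)
    rw [hE3 n, h0, hp0]
    simp
  -- alpha = 1 for all n
  have hα : ∀ n, alph (aN n) (bN n) (cN n) (dN n) = 1 := by
    intro n
    induction n with
    | zero =>
      show alph (aN 0) (bN 0) (cN 0) (dN 0) = 1
      rw [hid.1, hid.2.1, hid.2.2.1, hid.2.2.2]
      exact hαS
    | succ n _ =>
      rw [hE1 n, hE2 n, hE3 n, hE4 n]
      rw [alph_conj lam mu (hane n) (hL1 n) (hL3 n) (hR2 n) (hR4 n)]
      rw [← mul_pow, hdetT, one_pow]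
  -- norms of inverse entries
  have hsnorm : ∀ n, ‖sN n‖ = ‖aN n‖ :=
    fun n => norm_s (hane n) (hα n) (sinv_mul (hane n) (hR2 n) (hR4 n))
  have hpnorm : ∀ n, ‖pN n‖ = ‖dN n‖ :=
    fun n => norm_p (hdne n) (hα n) (pinv_mul (hdne n) (hR3 n) (hR1 n))
  have hqnorm : ∀ n, ‖qN n‖ = ‖bN n‖ := by
    intro n
    rw [q_eq (hane n) (hR2 n), norm_neg]
    simp only [norm_mul, norm_inv]
    rw [hsnorm n]
    have : ‖aN n‖ ≠ 0 := norm_ne_zero_iff.2 (hane n)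
    field_simp
  have hrnorm : ∀ n, ‖rN n‖ = ‖cN n‖ := by
    intro n
    have hr := q_eq (hdne n) (show dN n * rN n + cN n * pN n = 0 by rw [add_comm]; exact hR3 n)
    rw [hr, norm_neg]
    simp only [norm_mul, norm_inv]
    rw [hpnorm n]
    have : ‖dN n‖ ≠ 0 := norm_ne_zero_iff.2 (hdne n)
    field_simp
  -- the quantity x n
  set x : ℕ → ℝ := fun n => ‖bN n‖ * ‖cN n‖ with hxdef
  have hx_pos : ∀ n, 0 < x n :=
    fun n => mul_pos (norm_pos_iff.2 (hbne n)) (norm_pos_iff.2 (hcne n))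
  -- bounds on ‖a‖‖d‖
  have hAD_ub : ∀ n, ‖aN n‖ * ‖dN n‖ ≤ 1 + x n := by
    intro n
    have h1 := hα n
    have h2 : |(aN n * star (cN n) * dN n * star (bN n)).re| ≤ ‖aN n‖*‖cN n‖*‖dN n‖*‖bN n‖ := by
      have := abs_re_le_norm' (aN n * star (cN n) * dN n * star (bN n))
      simpa [norm_mul] using this
    rw [abs_le] at h2
    simp only [alph] at h1
    have key : (‖aN n‖*‖dN n‖ - ‖bN n‖*‖cN n‖)^2 ≤ 1 := by nlinarith [h1, h2.2]
    have key2 : ‖aN n‖*‖dN n‖ - ‖bN n‖*‖cN n‖ ≤ 1 := by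
      nlinarith [sq_nonneg (‖aN n‖*‖dN n‖ - ‖bN n‖*‖cN n‖ - 1)]
    show ‖aN n‖ * ‖dN n‖ ≤ 1 + ‖bN n‖ * ‖cN n‖
    linarith
  have hAD_lb : ∀ n, 1 - x n ≤ ‖aN n‖ * ‖dN n‖ := by
    intro n
    have h1 := hα n
    have h2 : |(aN n * star (cN n) * dN n * star (bN n)).re| ≤ ‖aN n‖*‖cN n‖*‖dN n‖*‖bN n‖ := by
      have := abs_re_le_norm' (aN n * star (cN n) * dN n * star (bN n))
      simpa [norm_mul] using this
    rw [abs_le] at h2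
    simp only [alph] at h1
    have key : 1 ≤ (‖aN n‖*‖dN n‖ + ‖bN n‖*‖cN n‖)^2 := by nlinarith [h1, h2.1]
    have ht0 : 0 ≤ ‖aN n‖*‖dN n‖ + ‖bN n‖*‖cN n‖ := by positivity
    have key2 : 1 ≤ ‖aN n‖*‖dN n‖ + ‖bN n‖*‖cN n‖ := by
      by_contra hcon2
      push_neg at hcon2
      nlinarith [key, ht0]
    show 1 - ‖bN n‖ * ‖cN n‖ ≤ ‖aN n‖ * ‖dN n‖
    linarith
  -- βT bounds
  have hconjnorm : ∀ e : ℍ[ℝ], e ≠ 0 → ‖e * mu * e⁻¹‖ = ‖mu‖ := by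
    intro e he
    have : ‖e‖ ≠ 0 := norm_ne_zero_iff.2 he
    rw [norm_mul, norm_mul, norm_inv]
    field_simp
  have hβT_ge : ∀ e f : ℍ[ℝ], e ≠ 0 → f ≠ 0 →
      ‖(lam - e*mu*e⁻¹) * (lam - f*mu*f⁻¹)‖ ≤ βT := by
    intro e f he hf
    rw [hβT]
    apply le_csSup
    · refine ⟨(‖lam‖ + ‖mu‖) * (‖lam‖ + ‖mu‖), ?_⟩
      rintro y ⟨e', f', he', hf', rfl⟩
      rw [norm_mul]
      have h1 : ‖lam - e'*mu*e'⁻¹‖ ≤ ‖lam‖ + ‖mu‖ := by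
        calc ‖lam - e'*mu*e'⁻¹‖ ≤ ‖lam‖ + ‖e'*mu*e'⁻¹‖ := norm_sub_le _ _
        _ = ‖lam‖ + ‖mu‖ := by rw [hconjnorm e' he']
      have h2 : ‖lam - f'*mu*f'⁻¹‖ ≤ ‖lam‖ + ‖mu‖ := by
        calc ‖lam - f'*mu*f'⁻¹‖ ≤ ‖lam‖ + ‖f'*mu*f'⁻¹‖ := norm_sub_le _ _
        _ = ‖lam‖ + ‖mu‖ := by rw [hconjnorm f' hf']
      exact mul_le_mul h1 h2 (norm_nonneg _) (by positivity)
    · exact ⟨e, f, he, hf, rfl⟩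
  have hβT0 : 0 ≤ βT := le_trans (norm_nonneg _) (hβT_ge 1 1 one_ne_zero one_ne_zero)
  -- norm recursions
  have hbrec : ∀ n, ‖bN (n+1)‖ =
      ‖lam - ((aN n)⁻¹*bN n)*mu*((aN n)⁻¹*bN n)⁻¹‖ * (‖bN n‖ * ‖aN n‖) := by
    intro n
    rw [hE2 n, b2_norm lam mu (hane n) (hbne n) (hR2 n), hsnorm n]
  have hcrec : ∀ n, ‖cN (n+1)‖ =
      ‖lam - ((cN n)⁻¹*dN n)*mu*((cN n)⁻¹*dN n)⁻¹‖ * (‖cN n‖ * ‖dN n‖) := by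
    intro n
    rw [hE3 n, c2_norm lam mu (hdne n) (hcne n) (hR3 n), hpnorm n]
  have hene : ∀ n, (aN n)⁻¹ * bN n ≠ 0 :=
    fun n => mul_ne_zero (inv_ne_zero (hane n)) (hbne n)
  have hfne : ∀ n, (cN n)⁻¹ * dN n ≠ 0 :=
    fun n => mul_ne_zero (inv_ne_zero (hcne n)) (hdne n)
  have hxrec : ∀ n, x (n+1) ≤ βT * (x n * (1 + x n)) := by
    intro n
    have h1 : ‖lam - ((aN n)⁻¹*bN n)*mu*((aN n)⁻¹*bN n)⁻¹‖ *
        ‖lam - ((cN n)⁻¹*dN n)*mu*((cN n)⁻¹*dN n)⁻¹‖ ≤ βT := by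
      rw [← norm_mul]
      exact hβT_ge _ _ (hene n) (hfne n)
    have hcalc : x (n+1) = (‖lam - ((aN n)⁻¹*bN n)*mu*((aN n)⁻¹*bN n)⁻¹‖ *
        ‖lam - ((cN n)⁻¹*dN n)*mu*((cN n)⁻¹*dN n)⁻¹‖) * ((‖bN n‖*‖cN n‖)*(‖aN n‖*‖dN n‖)) := by
      show ‖bN (n+1)‖ * ‖cN (n+1)‖ = _
      rw [hbrec n, hcrec n]; ring
    rw [hcalc]
    calc _ ≤ βT * ((‖bN n‖*‖cN n‖)*(‖aN n‖*‖dN n‖)) :=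
          mul_le_mul_of_nonneg_right h1 (by positivity)
    _ ≤ βT * (x n * (1 + x n)) := by
        apply mul_le_mul_of_nonneg_left _ hβT0
        exact mul_le_mul_of_nonneg_left (hAD_ub n) (le_of_lt (hx_pos n))
  -- numeric setup
  have hL2 : 2 ≤ L := by rw [hL]; linarith
  have hL0 : 0 < L := by linarith
  have hx0 : x 0 = ‖b * c‖ := by
    show ‖bN 0‖ * ‖cN 0‖ = _
    rw [hid.2.1, hid.2.2.1, norm_mul]
  have hk0 : 0 ≤ k := by
    rw [hk]
    have : (0:ℤ) ≤ ⌊(1:ℝ) + ‖b*c‖⌋ := by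
      apply Int.le_floor.mpr
      push_cast
      positivity
    omega
  have hk2 : 2 ≤ k := by
    rw [hk]
    have : (1:ℤ) ≤ ⌊(1:ℝ) + ‖b*c‖⌋ := by
      apply Int.le_floor.mpr
      push_cast
      linarith [norm_nonneg (b*c)]
    omega
  have hkn2 : 2 ≤ k.toNat := by omega
  have hLk : L ^ k = L ^ (k.toNat) := by
    rw [← zpow_natCast L k.toNat, Int.toNat_of_nonneg hk0]
  have h1x0 : 1 + x 0 < L ^ k := by
    have ha1 : 1 + x 0 < (k : ℝ) := by
      rw [hk, hx0]
      push_cast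
      have := Int.lt_floor_add_one ((1:ℝ) + ‖b*c‖)
      linarith
    have ha2 : (k : ℝ) ≤ 2 ^ k.toNat := by
      rw [← Int.toNat_of_nonneg hk0]
      push_cast
      exact_mod_cast (Nat.lt_two_pow_self (n := k.toNat)).le
    have ha3 : (2:ℝ) ^ k.toNat ≤ L ^ k.toNat := pow_le_pow_left₀ (by norm_num) hL2 _
    rw [hLk]
    linarith
  have hLk_pos : (0:ℝ) < L ^ k := by
    rw [hLk]; positivity
  have hQlt : βT * (1 + x 0) < 1 :=
    lt_of_le_of_lt (mul_le_mul_of_nonneg_left (le_of_lt h1x0) hβT0) hcon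
  set Q : ℝ := βT * (1 + x 0) with hQdef
  have hQ0 : 0 ≤ Q := by
    apply mul_nonneg hβT0
    nlinarith [hx_pos 0]
  -- monotonicity of x
  have hxle : ∀ n, x n ≤ x 0 := by
    intro n
    induction n with
    | zero => exact le_refl _
    | succ n ih =>
      have h1 := hxrec n
      have h2 : βT * (x n * (1 + x n)) ≤ Q * x n := by
        rw [hQdef]
        have : x n * (1 + x n) ≤ x n * (1 + x 0) :=
          mul_le_mul_of_nonneg_left (by linarith) (le_of_lt (hx_pos n))
        calc βT * (x n * (1 + x n)) ≤ βT * (x n * (1 + x 0)) :=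
            mul_le_mul_of_nonneg_left this hβT0
        _ = βT * (1 + x 0) * x n := by ring
      have h3 : Q * x n ≤ x n := by
        nlinarith [hx_pos n]
      linarith
  have hxstep : ∀ n, x (n+1) ≤ Q * x n := by
    intro n
    have h1 := hxrec n
    have h2 : βT * (x n * (1 + x n)) ≤ Q * x n := by
      rw [hQdef]
      have : x n * (1 + x n) ≤ x n * (1 + x 0) :=
        mul_le_mul_of_nonneg_left (by linarith [hxle n]) (le_of_lt (hx_pos n))
      calc βT * (x n * (1 + x n)) ≤ βT * (x n * (1 + x 0)) :=
          mul_le_mul_of_nonneg_left this hβT0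
      _ = βT * (1 + x 0) * x n := by ring
    linarith
  have hxlt : ∀ n, x (n+1) < x n := by
    intro n
    have := hxstep n
    nlinarith [hx_pos n]
  have hxanti : StrictAnti x := strictAnti_nat_of_succ_lt hxlt
  have hxgeo : ∀ n, x n ≤ Q^n * x 0 := by
    intro n
    induction n with
    | zero => simp
    | succ n ih =>
      calc x (n+1) ≤ Q * x n := hxstep n
      _ ≤ Q * (Q^n * x 0) := mul_le_mul_of_nonneg_left ih hQ0
      _ = Q^(n+1) * x 0 := by ring
  have hxto : Tendsto x atTop (nhds 0) := by
    apply squeeze_zero (fun n => le_of_lt (hx_pos n)) hxgeo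
    have := (tendsto_pow_atTop_nhds_zero_of_lt_one hQ0 hQlt).mul_const (x 0)
    simpa using this
  -- entry norm upper bounds
  have hlam_pos : 0 < ‖lam‖ := by
    rcases lt_or_ge 0 ‖lam‖ with h | h
    · exact h
    · exfalso
      have : ‖lam‖ = 0 := le_antisymm h (norm_nonneg _)
      rw [this, zero_mul] at hdetT
      norm_num at hdetT
  have hlam1 : ‖lam‖ ≤ 1 := by nlinarith
  have haub : ∀ n, ‖aN (n+1)‖ ≤ 1 + L * x n := by
    intro n
    have h1 : ‖aN (n+1)‖ ≤ ‖lam‖ * (‖aN n‖ * ‖dN n‖) + ‖mu‖ * (‖bN n‖ * ‖cN n‖) := by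
      rw [hE1 n]
      calc ‖aN n*lam*pN n + bN n*mu*rN n‖ ≤ ‖aN n*lam*pN n‖ + ‖bN n*mu*rN n‖ := norm_add_le _ _
      _ = ‖lam‖ * (‖aN n‖ * ‖pN n‖) + ‖mu‖ * (‖bN n‖ * ‖rN n‖) := by
          simp only [norm_mul]; ring
      _ = ‖lam‖ * (‖aN n‖ * ‖dN n‖) + ‖mu‖ * (‖bN n‖ * ‖cN n‖) := by
          rw [hpnorm n, hrnorm n]
    have h2 := hAD_ub n
    have hmu0 : 0 < ‖mu‖ := by linarith
    have hx' : (0:ℝ) < x n := hx_pos n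
    rw [hL]
    have h2' : ‖aN n‖*‖dN n‖ ≤ 1 + ‖bN n‖*‖cN n‖ := hAD_ub n
    have hx'' : (0:ℝ) < ‖bN n‖*‖cN n‖ := hx_pos n
    show ‖aN (n+1)‖ ≤ 1 + (1 + ‖mu‖) * (‖bN n‖ * ‖cN n‖)
    nlinarith [h1, h2', hx'', hlam1, hmu0,
      mul_le_mul_of_nonneg_left h2' (le_of_lt hlam_pos)]
  have hdub : ∀ n, ‖dN (n+1)‖ ≤ ‖mu‖ + L * x n := by
    intro n
    have h1 : ‖dN (n+1)‖ ≤ ‖lam‖ * (‖bN n‖ * ‖cN n‖) + ‖mu‖ * (‖aN n‖ * ‖dN n‖) := by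
      rw [hE4 n]
      calc ‖cN n*lam*qN n + dN n*mu*sN n‖ ≤ ‖cN n*lam*qN n‖ + ‖dN n*mu*sN n‖ := norm_add_le _ _
      _ = ‖lam‖ * (‖cN n‖ * ‖qN n‖) + ‖mu‖ * (‖dN n‖ * ‖sN n‖) := by
          simp only [norm_mul]; ring
      _ = ‖lam‖ * (‖bN n‖ * ‖cN n‖) + ‖mu‖ * (‖aN n‖ * ‖dN n‖) := by
          rw [hqnorm n, hsnorm n]; ring
    have h2 := hAD_ub n
    have hmu0 : 0 < ‖mu‖ := by linarith
    have hx' : (0:ℝ) < x n := hx_pos n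
    rw [hL]
    have h2' : ‖aN n‖*‖dN n‖ ≤ 1 + ‖bN n‖*‖cN n‖ := hAD_ub n
    have hx'' : (0:ℝ) < ‖bN n‖*‖cN n‖ := hx_pos n
    show ‖dN (n+1)‖ ≤ ‖mu‖ + (1 + ‖mu‖) * (‖bN n‖ * ‖cN n‖)
    nlinarith [h1, h2', hx'', hlam1, hmu0,
      mul_le_mul_of_nonneg_left h2' (le_of_lt hmu0)]
  -- sqrt bound
  set bhat : ℝ := Real.sqrt βT with hbhatdef
  have hbhat0 : 0 ≤ bhat := Real.sqrt_nonneg _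
  have hfac : ∀ e : ℍ[ℝ], e ≠ 0 → ‖lam - e*mu*e⁻¹‖ ≤ bhat := by
    intro e he
    have h1 : ‖lam - e*mu*e⁻¹‖^2 ≤ βT := by
      rw [pow_two, ← norm_mul]
      exact hβT_ge e e he he
    have h2 : ‖lam - e*mu*e⁻¹‖ = Real.sqrt (‖lam - e*mu*e⁻¹‖^2) :=
      (Real.sqrt_sq (norm_nonneg _)).symm
    rw [hbhatdef, h2]
    exact Real.sqrt_le_sqrt h1
  have hbhatL : bhat * L < 1 := by
    have h1 : βT * L^2 < 1 := by
      have h2 : L^2 ≤ L^(k.toNat) := pow_le_pow_right₀ (by linarith) hkn2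
      have h3 : βT * L^(k.toNat) < 1 := by rw [← hLk]; exact hcon
      nlinarith [pow_pos hL0 2]
    have h4 : (bhat * L)^2 = βT * L^2 := by
      rw [mul_pow, hbhatdef, Real.sq_sqrt hβT0]
    nlinarith [mul_nonneg hbhat0 (le_of_lt hL0)]
  -- eventual smallness of x
  obtain ⟨N₀, hN₀⟩ : ∃ N₀, ∀ n, N₀ ≤ n → x n < 1/(2*L) := by
    have hev : ∀ᶠ n in atTop, x n < 1/(2*L) := hxto.eventually (gt_mem_nhds (by positivity))
    rw [eventually_atTop] at hev
    exact hev
  -- contraction of b and c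
  set ρ : ℝ := 1 - 1/(2*L) with hρdef
  have hρ1 : ρ < 1 := by
    rw [hρdef]
    have : 0 < 1/(2*L) := by positivity
    linarith
  have hρ0 : 0 ≤ ρ := by
    rw [hρdef]
    have : 1/(2*L) ≤ 1/(2*2) := by
      apply div_le_div_of_nonneg_left <;> linarith
    linarith
  have hbhat_le : bhat ≤ 1/L := by
    rw [le_div_iff₀ hL0]; linarith
  have hbcontr : ∀ n, N₀ + 1 ≤ n → ‖bN (n+1)‖ ≤ ρ * ‖bN n‖ := by
    intro n hn
    obtain ⟨m, rfl⟩ : ∃ m, n = m + 1 := ⟨n - 1, by omega⟩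
    have hm : N₀ ≤ m := by omega
    have hxm : x m < 1/(2*L) := hN₀ m hm
    have h1 : ‖bN (m+1+1)‖ ≤ bhat * (‖bN (m+1)‖ * ‖aN (m+1)‖) := by
      rw [hbrec (m+1)]
      exact mul_le_mul_of_nonneg_right (hfac _ (hene (m+1))) (by positivity)
    have h2 : ‖aN (m+1)‖ ≤ 1 + L * x m := haub m
    have h3 : bhat * (1 + L * x m) ≤ ρ := by
      have h4 : bhat * (1 + L * x m) ≤ (1/L) * (1 + L * x m) := by
        apply mul_le_mul_of_nonneg_right hbhat_le
        nlinarith [hx_pos m]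
      have h5 : (1/L) * (1 + L * x m) = 1/L + x m := by
        field_simp
      rw [hρdef]
      rw [h5] at h4
      have h6 : 1/L + x m ≤ 1/L + 1/(2*L) := by linarith
      have h7 : 1/L + 1/(2*L) ≤ 1 - 1/(2*L) := by
        rw [div_add_div _ _ (by linarith : L ≠ 0) (by positivity : 2*L ≠ 0)]
        rw [div_le_iff₀ (by positivity), sub_mul]
        field_simp
        nlinarith
      linarith
    calc ‖bN (m+1+1)‖ ≤ bhat * (‖bN (m+1)‖ * ‖aN (m+1)‖) := h1
    _ = (bhat * ‖aN (m+1)‖) * ‖bN (m+1)‖ := by ring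
    _ ≤ (bhat * (1 + L * x m)) * ‖bN (m+1)‖ := by
        apply mul_le_mul_of_nonneg_right _ (norm_nonneg _)
        exact mul_le_mul_of_nonneg_left h2 hbhat0
    _ ≤ ρ * ‖bN (m+1)‖ := mul_le_mul_of_nonneg_right h3 (norm_nonneg _)
  have hccontr : ∀ n, N₀ + 1 ≤ n → ‖cN (n+1)‖ ≤ ρ * ‖cN n‖ := by
    intro n hn
    obtain ⟨m, rfl⟩ : ∃ m, n = m + 1 := ⟨n - 1, by omega⟩
    have hm : N₀ ≤ m := by omega
    have hxm : x m < 1/(2*L) := hN₀ m hm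
    have h1 : ‖cN (m+1+1)‖ ≤ bhat * (‖cN (m+1)‖ * ‖dN (m+1)‖) := by
      rw [hcrec (m+1)]
      exact mul_le_mul_of_nonneg_right (hfac _ (hfne (m+1))) (by positivity)
    have h2 : ‖dN (m+1)‖ ≤ ‖mu‖ + L * x m := hdub m
    have h3 : bhat * (‖mu‖ + L * x m) ≤ ρ := by
      have h4 : bhat * (‖mu‖ + L * x m) ≤ (1/L) * (‖mu‖ + L * x m) := by
        apply mul_le_mul_of_nonneg_right hbhat_le
        nlinarith [hx_pos m]
      have h5 : (1/L) * (‖mu‖ + L * x m) = ‖mu‖/L + x m := by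
        field_simp
      rw [hρdef]
      rw [h5] at h4
      have h6 : ‖mu‖/L = 1 - 1/L := by
        rw [hL]
        field_simp
        ring
      have h7 : ‖mu‖/L + x m ≤ 1 - 1/L + 1/(2*L) := by
        rw [h6] at *
        linarith
      have h8 : 1 - 1/L + 1/(2*L) = 1 - 1/(2*L) := by
        field_simp
        ring
      linarith [h4, h7, h8.le]
    calc ‖cN (m+1+1)‖ ≤ bhat * (‖cN (m+1)‖ * ‖dN (m+1)‖) := h1
    _ = (bhat * ‖dN (m+1)‖) * ‖cN (m+1)‖ := by ring
    _ ≤ (bhat * (‖mu‖ + L * x m)) * ‖cN (m+1)‖ := by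
        apply mul_le_mul_of_nonneg_right _ (norm_nonneg _)
        exact mul_le_mul_of_nonneg_left h2 hbhat0
    _ ≤ ρ * ‖cN (m+1)‖ := mul_le_mul_of_nonneg_right h3 (norm_nonneg _)
  have hbto : Tendsto bN atTop (nhds 0) := decay_tendsto_zero hρ0 hρ1 (N₀+1) hbcontr
  have hcto : Tendsto cN atTop (nhds 0) := decay_tendsto_zero hρ0 hρ1 (N₀+1) hccontr
  have hqto : Tendsto qN atTop (nhds 0) := by
    rw [tendsto_zero_iff_norm_tendsto_zero]
    have heq : (fun n => ‖qN n‖) = fun n => ‖bN n‖ := funext hqnorm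
    rw [heq, ← tendsto_zero_iff_norm_tendsto_zero]
    exact hbto
  have hrto : Tendsto rN atTop (nhds 0) := by
    rw [tendsto_zero_iff_norm_tendsto_zero]
    have heq : (fun n => ‖rN n‖) = fun n => ‖cN n‖ := funext hrnorm
    rw [heq, ← tendsto_zero_iff_norm_tendsto_zero]
    exact hcto
  -- global bounds for n ≥ 1
  set Ab : ℝ := 1 + L * x 0 with hAbdef
  set Db : ℝ := ‖mu‖ + L * x 0 with hDbdef
  have hAb0 : 0 < Ab := by
    rw [hAbdef]; nlinarith [hx_pos 0]
  have hDb0 : 0 < Db := by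
    rw [hDbdef]; nlinarith [hx_pos 0]
  have haub' : ∀ n, ‖aN (n+1)‖ ≤ Ab := by
    intro n
    calc ‖aN (n+1)‖ ≤ 1 + L * x n := haub n
    _ ≤ Ab := by rw [hAbdef]; nlinarith [hxle n]
  have hdub' : ∀ n, ‖dN (n+1)‖ ≤ Db := by
    intro n
    calc ‖dN (n+1)‖ ≤ ‖mu‖ + L * x n := hdub n
    _ ≤ Db := by rw [hDbdef]; nlinarith [hxle n]
  -- lower bounds eventually
  obtain ⟨N₁, hN₁⟩ : ∃ N₁, ∀ n, N₁ ≤ n → x n < 1/2 := by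
    have hev : ∀ᶠ n in atTop, x n < 1/2 := hxto.eventually (gt_mem_nhds (by norm_num))
    rw [eventually_atTop] at hev
    exact hev
  have halb : ∀ n, N₁ + 1 ≤ n → 1/(2*Db) ≤ ‖aN n‖ := by
    intro n hn
    have hx2 : x n < 1/2 := hN₁ n (by omega)
    have h1 : 1/2 ≤ ‖aN n‖ * ‖dN n‖ := by
      have := hAD_lb n
      linarith
    obtain ⟨m, rfl⟩ : ∃ m, n = m + 1 := ⟨n - 1, by omega⟩
    have h2 : ‖dN (m+1)‖ ≤ Db := hdub' m
    rw [div_le_iff₀ (by positivity)]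
    nlinarith [norm_nonneg (aN (m+1)), norm_nonneg (dN (m+1))]
  have hdlb : ∀ n, N₁ + 1 ≤ n → 1/(2*Ab) ≤ ‖dN n‖ := by
    intro n hn
    have hx2 : x n < 1/2 := hN₁ n (by omega)
    have h1 : 1/2 ≤ ‖aN n‖ * ‖dN n‖ := by
      have := hAD_lb n
      linarith
    obtain ⟨m, rfl⟩ : ∃ m, n = m + 1 := ⟨n - 1, by omega⟩
    have h2 : ‖aN (m+1)‖ ≤ Ab := haub' m
    rw [div_le_iff₀ (by positivity)]
    nlinarith [norm_nonneg (aN (m+1)), norm_nonneg (dN (m+1))]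
  -- subsequence extraction
  have habdd : ∀ n, aN (n+1) ∈ Metric.closedBall (0:ℍ[ℝ]) Ab := by
    intro n
    rw [Metric.mem_closedBall, dist_zero_right]
    exact haub' n
  obtain ⟨α₀, -, φ₁, hφ₁mono, hφ₁tend⟩ :=
    tendsto_subseq_of_bounded Metric.isBounded_closedBall habdd
  have hdbdd : ∀ j, dN (φ₁ j + 1) ∈ Metric.closedBall (0:ℍ[ℝ]) Db := by
    intro j
    rw [Metric.mem_closedBall, dist_zero_right]
    exact hdub' _
  obtain ⟨δ₀, -, φ₂, hφ₂mono, hφ₂tend⟩ :=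
    tendsto_subseq_of_bounded Metric.isBounded_closedBall hdbdd
  set ψ : ℕ → ℕ := fun j => φ₁ (φ₂ j) + 1 with hψdef
  have hψmono : StrictMono ψ := by
    intro i j hij
    have h := hφ₁mono (hφ₂mono hij)
    simp only [hψdef]
    omega
  have hψ_top : Tendsto ψ atTop atTop := hψmono.tendsto_atTop
  have ha_ψ : Tendsto (fun j => aN (ψ j)) atTop (nhds α₀) := by
    have : (fun j => aN (ψ j)) = ((fun n => aN (n+1)) ∘ φ₁) ∘ φ₂ := rfl
    rw [this]
    exact hφ₁tend.comp hφ₂mono.tendsto_atTop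
  have hd_ψ : Tendsto (fun j => dN (ψ j)) atTop (nhds δ₀) := hφ₂tend
  have hb_ψ : Tendsto (fun j => bN (ψ j)) atTop (nhds 0) := hbto.comp hψ_top
  have hc_ψ : Tendsto (fun j => cN (ψ j)) atTop (nhds 0) := hcto.comp hψ_top
  have hq_ψ : Tendsto (fun j => qN (ψ j)) atTop (nhds 0) := hqto.comp hψ_top
  have hr_ψ : Tendsto (fun j => rN (ψ j)) atTop (nhds 0) := hrto.comp hψ_top
  -- limits nonzero
  have hα₀ne : α₀ ≠ 0 := by
    have hnorm : Tendsto (fun j => ‖aN (ψ j)‖) atTop (nhds ‖α₀‖) := ha_ψ.norm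
    have hev : ∀ᶠ j in atTop, 1/(2*Db) ≤ ‖aN (ψ j)‖ := by
      rw [eventually_atTop]
      refine ⟨N₁ + 1, fun j hj => halb (ψ j) ?_⟩
      have h2 : j ≤ ψ j := hψmono.le_apply
      omega
    have := ge_of_tendsto hnorm hev
    intro h0
    rw [h0, norm_zero] at this
    have : (0:ℝ) < 1/(2*Db) := by positivity
    linarith
  have hδ₀ne : δ₀ ≠ 0 := by
    have hnorm : Tendsto (fun j => ‖dN (ψ j)‖) atTop (nhds ‖δ₀‖) := hd_ψ.norm
    have hev : ∀ᶠ j in atTop, 1/(2*Ab) ≤ ‖dN (ψ j)‖ := by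
      rw [eventually_atTop]
      refine ⟨N₁ + 1, fun j hj => hdlb (ψ j) ?_⟩
      have h2 : j ≤ ψ j := hψmono.le_apply
      omega
    have := ge_of_tendsto hnorm hev
    intro h0
    rw [h0, norm_zero] at this
    have : (0:ℝ) < 1/(2*Ab) := by positivity
    linarith
  -- limits of inverse entries
  have hpval : ∀ n, pN n = (aN n - bN n*(dN n)⁻¹*cN n)⁻¹ :=
    fun n => eq_inv_of_mul_eq_one_right (pinv_mul (hdne n) (hR3 n) (hR1 n))
  have hsval : ∀ n, sN n = (dN n - cN n*(aN n)⁻¹*bN n)⁻¹ :=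
    fun n => eq_inv_of_mul_eq_one_right (sinv_mul (hane n) (hR2 n) (hR4 n))
  have hp_ψ : Tendsto (fun j => pN (ψ j)) atTop (nhds α₀⁻¹) := by
    have h1 : Tendsto (fun j => aN (ψ j) - bN (ψ j)*(dN (ψ j))⁻¹*cN (ψ j)) atTop (nhds α₀) := by
      have h2 := (hb_ψ.mul (hd_ψ.inv₀ hδ₀ne)).mul hc_ψ
      have h3 := ha_ψ.sub h2
      simpa using h3
    have h4 := h1.inv₀ hα₀ne
    have heq : (fun j => pN (ψ j)) =
        fun j => (aN (ψ j) - bN (ψ j)*(dN (ψ j))⁻¹*cN (ψ j))⁻¹ := funext fun j => hpval (ψ j)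
    rw [heq]
    exact h4
  have hs_ψ : Tendsto (fun j => sN (ψ j)) atTop (nhds δ₀⁻¹) := by
    have h1 : Tendsto (fun j => dN (ψ j) - cN (ψ j)*(aN (ψ j))⁻¹*bN (ψ j)) atTop (nhds δ₀) := by
      have h2 := (hc_ψ.mul (ha_ψ.inv₀ hα₀ne)).mul hb_ψ
      have h3 := hd_ψ.sub h2
      simpa using h3
    have h4 := h1.inv₀ hδ₀ne
    have heq : (fun j => sN (ψ j)) =
        fun j => (dN (ψ j) - cN (ψ j)*(aN (ψ j))⁻¹*bN (ψ j))⁻¹ := funext fun j => hsval (ψ j)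
    rw [heq]
    exact h4
  -- the difference sequence
  set D : ℕ → (Matrix (Fin 2) (Fin 2) ℍ[ℝ])ˣ := fun j => U (ψ (j+1)) * (U (ψ j))⁻¹ with hDdef
  have hDval : ∀ j, (D j).val =
      !![aN (ψ (j+1)) * pN (ψ j) + bN (ψ (j+1)) * rN (ψ j),
         aN (ψ (j+1)) * qN (ψ j) + bN (ψ (j+1)) * sN (ψ j);
         cN (ψ (j+1)) * pN (ψ j) + dN (ψ (j+1)) * rN (ψ j),
         cN (ψ (j+1)) * qN (ψ j) + dN (ψ (j+1)) * sN (ψ j)] := by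
    intro j
    rw [hDdef]
    show (U (ψ (j+1)) * (U (ψ j))⁻¹).val = _
    rw [Units.val_mul, hUn _, hVn _, Matrix.mul_fin_two]
  -- shifted limits
  have ha_ψ' : Tendsto (fun j => aN (ψ (j+1))) atTop (nhds α₀) := by
    have : (fun j => aN (ψ (j+1))) = (fun j => aN (ψ j)) ∘ (fun j => j + 1) := rfl
    rw [this]
    exact ha_ψ.comp (tendsto_add_atTop_nat 1)
  have hb_ψ' : Tendsto (fun j => bN (ψ (j+1))) atTop (nhds 0) := by
    have : (fun j => bN (ψ (j+1))) = (fun j => bN (ψ j)) ∘ (fun j => j + 1) := rfl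
    rw [this]
    exact hb_ψ.comp (tendsto_add_atTop_nat 1)
  have hc_ψ' : Tendsto (fun j => cN (ψ (j+1))) atTop (nhds 0) := by
    have : (fun j => cN (ψ (j+1))) = (fun j => cN (ψ j)) ∘ (fun j => j + 1) := rfl
    rw [this]
    exact hc_ψ.comp (tendsto_add_atTop_nat 1)
  have hd_ψ' : Tendsto (fun j => dN (ψ (j+1))) atTop (nhds δ₀) := by
    have : (fun j => dN (ψ (j+1))) = (fun j => dN (ψ j)) ∘ (fun j => j + 1) := rfl
    rw [this]
    exact hd_ψ.comp (tendsto_add_atTop_nat 1)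
  -- convergence of D to identity
  have hDtend : Tendsto (fun j => (D j).val) atTop (nhds (1 : Matrix (Fin 2) (Fin 2) ℍ[ℝ])) := by
    have heq : (fun j => (D j).val) = fun j =>
        !![aN (ψ (j+1)) * pN (ψ j) + bN (ψ (j+1)) * rN (ψ j),
           aN (ψ (j+1)) * qN (ψ j) + bN (ψ (j+1)) * sN (ψ j);
           cN (ψ (j+1)) * pN (ψ j) + dN (ψ (j+1)) * rN (ψ j),
           cN (ψ (j+1)) * qN (ψ j) + dN (ψ (j+1)) * sN (ψ j)] := funext hDval
    rw [heq, Matrix.one_fin_two]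
    have h00 : Tendsto (fun j => aN (ψ (j+1)) * pN (ψ j) + bN (ψ (j+1)) * rN (ψ j))
        atTop (nhds 1) := by
      have := (ha_ψ'.mul hp_ψ).add (hb_ψ'.mul hr_ψ)
      simpa [mul_inv_cancel₀ hα₀ne] using this
    have h01 : Tendsto (fun j => aN (ψ (j+1)) * qN (ψ j) + bN (ψ (j+1)) * sN (ψ j))
        atTop (nhds 0) := by
      have := (ha_ψ'.mul hq_ψ).add (hb_ψ'.mul hs_ψ)
      simpa using this
    have h10 : Tendsto (fun j => cN (ψ (j+1)) * pN (ψ j) + dN (ψ (j+1)) * rN (ψ j))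
        atTop (nhds 0) := by
      have := (hc_ψ'.mul hp_ψ).add (hd_ψ'.mul hr_ψ)
      simpa using this
    have h11 : Tendsto (fun j => cN (ψ (j+1)) * qN (ψ j) + dN (ψ (j+1)) * sN (ψ j))
        atTop (nhds 1) := by
      have := (hc_ψ'.mul hq_ψ).add (hd_ψ'.mul hs_ψ)
      simpa [mul_inv_cancel₀ hδ₀ne] using this
    exact tendsto_mat2 h00 h01 h10 h11
  -- membership in the group
  have hUmem : ∀ n, U n ∈ Subgroup.closure ({US, UT} : Set (Matrix (Fin 2) (Fin 2) ℍ[ℝ])ˣ) := by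
    intro n
    induction n with
    | zero =>
      rw [hU0]
      exact Subgroup.subset_closure (by simp)
    | succ n ih =>
      rw [hUrec n]
      exact mul_mem (mul_mem ih (Subgroup.subset_closure (by simp))) (inv_mem ih)
  have hDmem : ∀ j, (D j).val ∈ Units.val '' ((Subgroup.closure {US, UT} :
      Subgroup (Matrix (Fin 2) (Fin 2) ℍ[ℝ])ˣ) : Set (Matrix (Fin 2) (Fin 2) ℍ[ℝ])ˣ) :=
    fun j => ⟨D j, mul_mem (hUmem _) (inv_mem (hUmem _)), rfl⟩
  have h1mem : (1 : Matrix (Fin 2) (Fin 2) ℍ[ℝ]) ∈ Units.val '' ((Subgroup.closure {US, UT} :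
      Subgroup (Matrix (Fin 2) (Fin 2) ℍ[ℝ])ˣ) : Set (Matrix (Fin 2) (Fin 2) ℍ[ℝ])ˣ) :=
    ⟨1, one_mem _, Units.val_one⟩
  -- discreteness contradiction
  set Sset := Units.val '' ((Subgroup.closure {US, UT} :
      Subgroup (Matrix (Fin 2) (Fin 2) ℍ[ℝ])ˣ) : Set (Matrix (Fin 2) (Fin 2) ℍ[ℝ])ˣ) with hSsetdef
  set g : ℕ → ↥Sset := fun j => ⟨(D j).val, hDmem j⟩ with hgdef
  have hg : Tendsto g atTop (nhds (⟨1, h1mem⟩ : ↥Sset)) := by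
    rw [tendsto_subtype_rng]
    exact hDtend
  rw [nhds_discrete, tendsto_pure] at hg
  obtain ⟨j, hj⟩ := hg.exists
  have hDj1 : (D j).val = 1 := congrArg Subtype.val hj
  have hDj : D j = 1 := Units.ext hDj1
  have hUeq : U (ψ (j+1)) = U (ψ j) := by
    rw [hDdef] at hDj
    simpa [mul_inv_eq_one] using hDj
  have hmateq : !![aN (ψ (j+1)), bN (ψ (j+1)); cN (ψ (j+1)), dN (ψ (j+1))] =
      !![aN (ψ j), bN (ψ j); cN (ψ j), dN (ψ j)] := by
    rw [← hUn _, ← hUn _, hUeq]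
  obtain ⟨-, hbeq, hceq, -⟩ := mat2_entries hmateq
  have hxeq : x (ψ (j+1)) = x (ψ j) := by
    show ‖bN (ψ (j+1))‖ * ‖cN (ψ (j+1))‖ = ‖bN (ψ j)‖ * ‖cN (ψ j)‖
    rw [hbeq, hceq]
  have hlt : x (ψ (j+1)) < x (ψ j) := hxanti (hψmono (Nat.lt_succ_self j))
  linarith [hxeq, hlt]
end

section
/- Let S = !![a,b;c,d] and T = !![λ,0;0,μ] be 2×2 quaternionic matrices with α_S = 1 and |λ|·|μ| = 1, where λ is not similar to μ. Suppose the subgroup of units of M₂(ℍ) generated by S and T is discrete, and the Shimizu–Leutbecher sequence S₀ = S, S_{n+1} = S_n·T·S_n⁻¹, S_n = !![a_n,b_n;c_n,d_n], satisfies b_n·c_n ≠ 0 for every n ≥ 0. Let K := (Re λ − Re μ)² + (|Im λ| + |Im μ|)², and suppose the extremal equality K·(1 + |b·c|) = 1 holds. Then for every n ≥ 0 one has K·(1 + |b_n·c_n|) = 1. -/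
open Matrix Quaternion
open scoped Quaternion

open Filter Metric

noncomputable section JorgensenAux


noncomputable def aq (a b c d : ℍ[ℝ]) : ℝ :=
  normSq a * normSq d + normSq b * normSq c - 2*(a * star c * d * star b).re

lemma normSq_norm (x : ℍ[ℝ]) : normSq x = ‖x‖^2 := by
  rw [normSq_eq_norm_mul_self, sq]

lemma aq_norm (a b c d : ℍ[ℝ]) :
    aq a b c d = ‖a‖^2*‖d‖^2 + ‖b‖^2*‖c‖^2 - 2*(a * star c * d * star b).re := by
  simp [aq, normSq_norm]


lemma Q1 (a b c d f : ℍ[ℝ]) : aq (a - b*f) b (c - d*f) d = aq a b c d := by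
  simp only [aq, Quaternion.normSq_def', Quaternion.re_mul, Quaternion.imI_mul,
    Quaternion.imJ_mul, Quaternion.imK_mul, Quaternion.re_add, Quaternion.imI_add,
    Quaternion.imJ_add, Quaternion.imK_add, Quaternion.re_sub, Quaternion.imI_sub,
    Quaternion.imJ_sub, Quaternion.imK_sub, Quaternion.re_star, Quaternion.imI_star,
    Quaternion.imJ_star, Quaternion.imK_star]
  ring

lemma Q2 (a b c d w : ℍ[ℝ]) : aq a (a*w + b) c (c*w + d) = aq a b c d := by
  simp only [aq, Quaternion.normSq_def', Quaternion.re_mul, Quaternion.imI_mul,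
    Quaternion.imJ_mul, Quaternion.imK_mul, Quaternion.re_add, Quaternion.imI_add,
    Quaternion.imJ_add, Quaternion.imK_add, Quaternion.re_star, Quaternion.imI_star,
    Quaternion.imJ_star, Quaternion.imK_star]
  ring

lemma Q3 (a b c d x y : ℍ[ℝ]) :
    aq (a*x) (b*y) (c*x) (d*y) = normSq x * normSq y * aq a b c d := by
  simp only [aq, Quaternion.normSq_def', Quaternion.re_mul, Quaternion.imI_mul,
    Quaternion.imJ_mul, Quaternion.imK_mul, Quaternion.re_star, Quaternion.imI_star,
    Quaternion.imJ_star, Quaternion.imK_star]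
  ring

lemma Q4 (a c d e : ℍ[ℝ]) : aq a (a*e) c d = normSq a * normSq (d - c*e) := by
  simp only [aq, Quaternion.normSq_def', Quaternion.re_mul, Quaternion.imI_mul,
    Quaternion.imJ_mul, Quaternion.imK_mul, Quaternion.re_sub, Quaternion.imI_sub,
    Quaternion.imJ_sub, Quaternion.imK_sub, Quaternion.re_star, Quaternion.imI_star,
    Quaternion.imJ_star, Quaternion.imK_star]
  ring

lemma Q5 (a b d f : ℍ[ℝ]) : aq a b (d*f) d = normSq d * normSq (a - b*f) := by
  simp only [aq, Quaternion.normSq_def', Quaternion.re_mul, Quaternion.imI_mul,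
    Quaternion.imJ_mul, Quaternion.imK_mul, Quaternion.re_sub, Quaternion.imI_sub,
    Quaternion.imJ_sub, Quaternion.imK_sub, Quaternion.re_star, Quaternion.imI_star,
    Quaternion.imJ_star, Quaternion.imK_star]
  ring

lemma QE (s t : ℝ) (u v x : ℍ[ℝ]) (hu : u.re = 0) (hv : v.re = 0) :
    normSq (((s:ℍ[ℝ]) + u) * x - x * ((t:ℍ[ℝ]) + v)) =
      (s - t)^2 * normSq x + normSq u * normSq x + normSq v * normSq x
        + 2*(u * x * v * star x).re := by
  simp only [Quaternion.normSq_def', Quaternion.re_mul, Quaternion.imI_mul,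
    Quaternion.imJ_mul, Quaternion.imK_mul, Quaternion.re_add, Quaternion.imI_add,
    Quaternion.imJ_add, Quaternion.imK_add, Quaternion.re_sub, Quaternion.imI_sub,
    Quaternion.imJ_sub, Quaternion.imK_sub, Quaternion.re_star, Quaternion.imI_star,
    Quaternion.imJ_star, Quaternion.imK_star, Quaternion.re_coe, Quaternion.imI_coe,
    Quaternion.imJ_coe, Quaternion.imK_coe] at hu hv ⊢
  rw [hu, hv]
  ring

lemma re_le_norm (w : ℍ[ℝ]) : |w.re| ≤ ‖w‖ := by
  have h1 : ‖w‖^2 = w.re^2 + w.imI^2 + w.imJ^2 + w.imK^2 := by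
    rw [← normSq_norm, Quaternion.normSq_def']
  have := norm_nonneg w
  nlinarith [sq_nonneg w.imI, sq_nonneg w.imJ, sq_nonneg w.imK, abs_nonneg w.re, sq_abs w.re]

lemma key_bound (lam mu x : ℍ[ℝ]) :
    normSq (lam * x - x * mu) ≤ ((lam.re - mu.re)^2 + (‖lam.im‖ + ‖mu.im‖)^2) * normSq x := by
  have h := QE lam.re mu.re lam.im mu.im x (by simp) (by simp)
  rw [Quaternion.re_add_im, Quaternion.re_add_im] at h
  have hre : (lam.im * x * mu.im * star x).re ≤ ‖lam.im‖ * ‖mu.im‖ * normSq x := by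
    have := (abs_le.mp (re_le_norm (lam.im * x * mu.im * star x))).2
    have h2 : ‖lam.im * x * mu.im * star x‖ = ‖lam.im‖ * ‖mu.im‖ * normSq x := by
      rw [norm_mul, norm_mul, norm_mul, norm_star, normSq_norm]; ring
    linarith
  have h3 : normSq lam.im = ‖lam.im‖^2 := normSq_norm _
  have h4 : normSq mu.im = ‖mu.im‖^2 := normSq_norm _
  have h5 : 0 ≤ normSq x := by rw [normSq_norm]; positivity
  nlinarith [h, hre]

lemma ad_bounds (a b c d : ℍ[ℝ]) (hα : aq a b c d = 1) :
    ‖a‖*‖d‖ ≤ 1 + ‖b‖*‖c‖ ∧ 1 ≤ ‖a‖*‖d‖ + ‖b‖*‖c‖ := by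
  rw [aq_norm] at hα
  have hre := abs_le.mp (re_le_norm (a * star c * d * star b))
  have hnm : ‖a * star c * d * star b‖ = ‖a‖*‖c‖*‖d‖*‖b‖ := by
    rw [norm_mul, norm_mul, norm_mul, norm_star, norm_star]
  rw [hnm] at hre
  have na := norm_nonneg a; have nb := norm_nonneg b
  have nc := norm_nonneg c; have nd := norm_nonneg d
  constructor
  · nlinarith [sq_nonneg (‖a‖*‖d‖ - ‖b‖*‖c‖ - 1), sq_nonneg (‖a‖*‖d‖ - ‖b‖*‖c‖ + 1),
      mul_nonneg (mul_nonneg na nd) (mul_nonneg nb nc)]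
  · have hy : 0 ≤ ‖a‖*‖d‖ + ‖b‖*‖c‖ := by positivity
    have hsq : 1 ≤ (‖a‖*‖d‖ + ‖b‖*‖c‖)^2 := by nlinarith [hre.1]
    nlinarith [hsq, hy, mul_self_nonneg (1 - (‖a‖*‖d‖ + ‖b‖*‖c‖)), mul_nonneg hy hy]

lemma step_zero_b (a b q s b' lam mu : ℍ[ℝ]) (h2 : a*q + b*s = 0)
    (hb' : b' = a*lam*q + b*mu*s) (ha : a = 0) (hb : b ≠ 0) : b' = 0 := by
  subst ha
  simp only [zero_mul, zero_add] at h2 hb'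
  rcases mul_eq_zero.mp h2 with h | h
  · exact absurd h hb
  · rw [h, mul_zero] at hb'; exact hb'

lemma step_zero_c (c d p r c' lam mu : ℍ[ℝ]) (h3 : c*p + d*r = 0)
    (hc' : c' = c*lam*p + d*mu*r) (hd : d = 0) (hc : c ≠ 0) : c' = 0 := by
  subst hd
  simp only [zero_mul, add_zero, mul_zero] at h3 hc'
  rcases mul_eq_zero.mp h3 with h | h
  · exact absurd h hc
  · rw [h, mul_zero] at hc'; exact hc'

lemma norm_sq_eq_of_normSq_eq {x y : ℍ[ℝ]} (h : normSq x = normSq y) : ‖x‖ = ‖y‖ := by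
  have h2 : ‖x‖^2 = ‖y‖^2 := by rw [← normSq_norm, ← normSq_norm, h]
  have := congrArg Real.sqrt h2
  rwa [Real.sqrt_sq (norm_nonneg _), Real.sqrt_sq (norm_nonneg _)] at this

lemma normSq_pos' {x : ℍ[ℝ]} (hx : x ≠ 0) : 0 < normSq x := by
  rw [normSq_norm]
  have := norm_pos_iff.mpr hx
  positivity

theorem step_main (lam mu : ℍ[ℝ]) (K : ℝ)
    (hK : K = (lam.re - mu.re)^2 + (‖lam.im‖ + ‖mu.im‖)^2)
    (hdetT : ‖lam‖ * ‖mu‖ = 1)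
    (a b c d p q r s a' b' c' d' : ℍ[ℝ])
    (h1 : a*p + b*r = 1) (h2 : a*q + b*s = 0) (h3 : c*p + d*r = 0) (h4 : c*q + d*s = 1)
    (ha' : a' = a*lam*p + b*mu*r) (hb' : b' = a*lam*q + b*mu*s)
    (hc' : c' = c*lam*p + d*mu*r) (hd' : d' = c*lam*q + d*mu*s)
    (hα : aq a b c d = 1)
    (ha : a ≠ 0) (hd : d ≠ 0) :
    ‖s‖ = ‖a‖ ∧ ‖p‖ = ‖d‖ ∧ ‖q‖ = ‖b‖ ∧ ‖r‖ = ‖c‖ ∧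
    aq a' b' c' d' = 1 ∧
    ‖b'‖^2 ≤ K * (‖b‖^2 * ‖a‖^2) ∧ ‖c'‖^2 ≤ K * (‖c‖^2 * ‖d‖^2) ∧
    ‖a'‖ ≤ ‖lam‖*(‖a‖*‖d‖) + ‖mu‖*(‖b‖*‖c‖) ∧
    ‖d'‖ ≤ ‖mu‖*(‖a‖*‖d‖) + ‖lam‖*(‖b‖*‖c‖) := by
  have hNa : (0:ℝ) < normSq a := normSq_pos' ha
  have hNd : (0:ℝ) < normSq d := normSq_pos' hd
  obtain ⟨e, hae⟩ : ∃ e : ℍ[ℝ], a * e = b := ⟨a⁻¹ * b, by rw [← mul_assoc, mul_inv_cancel₀ ha, one_mul]⟩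
  obtain ⟨f, hdf⟩ : ∃ f : ℍ[ℝ], d * f = c := ⟨d⁻¹ * c, by rw [← mul_assoc, mul_inv_cancel₀ hd, one_mul]⟩
  have hq : q = -(e * s) := by
    apply mul_left_cancel₀ ha
    have h2' : a * q = -(b * s) := by rw [eq_neg_iff_add_eq_zero]; exact h2
    rw [h2', ← hae]; noncomm_ring
  have hr : r = -(f * p) := by
    apply mul_left_cancel₀ hd
    have h3' : d * r = -(c * p) := by rw [eq_neg_iff_add_eq_zero, add_comm]; exact h3
    rw [h3', ← hdf]; noncomm_ring
  have hs1 : (d - c*e) * s = 1 := by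
    rw [hq] at h4
    calc (d - c*e) * s = c * -(e * s) + d * s := by noncomm_ring
    _ = 1 := h4
  have hp1 : (a - b*f) * p = 1 := by
    rw [hr] at h1
    calc (a - b*f) * p = a * p + b * -(f * p) := by noncomm_ring
    _ = 1 := h1
  have hh0 : d - c*e ≠ 0 := by
    intro h0; rw [h0, zero_mul] at hs1; exact zero_ne_one hs1
  have hg0 : a - b*f ≠ 0 := by
    intro h0; rw [h0, zero_mul] at hp1; exact zero_ne_one hp1
  have hαh : normSq a * normSq (d - c*e) = 1 := by rw [← Q4 a c d e, hae, hα]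
  have hαg : normSq d * normSq (a - b*f) = 1 := by rw [← Q5 a b d f, hdf, hα]
  have hNh : normSq (d - c*e) ≠ 0 := ne_of_gt (normSq_pos' hh0)
  have hNg : normSq (a - b*f) ≠ 0 := ne_of_gt (normSq_pos' hg0)
  have hNs : normSq s = normSq a := by
    have h5 : normSq (d - c*e) * normSq s = 1 := by
      rw [← _root_.map_mul, hs1, _root_.map_one]
    have h7 : normSq (d - c*e) * normSq a = 1 := by rw [mul_comm]; exact hαh
    exact mul_left_cancel₀ hNh (h5.trans h7.symm)
  have hNp : normSq p = normSq d := by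
    have h5 : normSq (a - b*f) * normSq p = 1 := by
      rw [← _root_.map_mul, hp1, _root_.map_one]
    have h7 : normSq (a - b*f) * normSq d = 1 := by rw [mul_comm]; exact hαg
    exact mul_left_cancel₀ hNg (h5.trans h7.symm)
  have hsa : ‖s‖ = ‖a‖ := norm_sq_eq_of_normSq_eq hNs
  have hpd : ‖p‖ = ‖d‖ := norm_sq_eq_of_normSq_eq hNp
  have hA0 : ‖a‖ ≠ 0 := norm_ne_zero_iff.mpr ha
  have hD0 : ‖d‖ ≠ 0 := norm_ne_zero_iff.mpr hd
  have hEb : ‖e‖ = ‖b‖ / ‖a‖ := by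
    have h0 : ‖a‖ * ‖e‖ = ‖b‖ := by rw [← norm_mul, hae]
    rw [← h0, mul_div_cancel_left₀ _ hA0]
  have hFc : ‖f‖ = ‖c‖ / ‖d‖ := by
    have h0 : ‖d‖ * ‖f‖ = ‖c‖ := by rw [← norm_mul, hdf]
    rw [← h0, mul_div_cancel_left₀ _ hD0]
  have hqb : ‖q‖ = ‖b‖ := by
    rw [hq, norm_neg, norm_mul, hsa, hEb]; field_simp
  have hrc : ‖r‖ = ‖c‖ := by
    rw [hr, norm_neg, norm_mul, hpd, hFc]; field_simp
  refine ⟨hsa, hpd, hqb, hrc, ?_, ?_, ?_, ?_, ?_⟩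
  · -- aq a' b' c' d' = 1
    have ea' : a' = (a*lam - b*mu*f) * p := by rw [ha', hr]; noncomm_ring
    have eb' : b' = (b*mu - a*lam*e) * s := by rw [hb', hq]; noncomm_ring
    have ec' : c' = (c*lam - d*mu*f) * p := by rw [hc', hr]; noncomm_ring
    have ed' : d' = (d*mu - c*lam*e) * s := by rw [hd', hq]; noncomm_ring
    obtain ⟨u, hu⟩ : ∃ u : ℍ[ℝ], u = 1 - f*e := ⟨_, rfl⟩
    have hdu : d * u = d - c*e := by
      rw [hu, mul_sub, mul_one, ← mul_assoc, hdf]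
    have hu0 : u ≠ 0 := by
      intro h0; rw [h0, mul_zero] at hdu; exact hh0 hdu.symm
    obtain ⟨w, hw⟩ : ∃ w : ℍ[ℝ], w = -(e * u⁻¹) := ⟨_, rfl⟩
    have keyw : ∀ A B : ℍ[ℝ], ((A - B*f)*w + B)*u = B - A*e := by
      intro A B
      have hiu : u⁻¹ * u = 1 := inv_mul_cancel₀ hu0
      calc ((A - B*f)*w + B)*u
          = -((A - B*f) * e * (u⁻¹ * u)) + B * u := by rw [hw]; noncomm_ring
        _ = -((A - B*f) * e) + B * u := by rw [hiu, mul_one]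
        _ = B - A*e := by rw [hu]; noncomm_ring
    have hB : b*mu - a*lam*e = ((a*lam - b*mu*f)*w + b*mu)*u := (keyw (a*lam) (b*mu)).symm
    have hD : d*mu - c*lam*e = ((c*lam - d*mu*f)*w + d*mu)*u := (keyw (c*lam) (d*mu)).symm
    rw [ea', eb', ec', ed', hB, hD]
    rw [Q3]
    have e2 : aq (a*lam - b*mu*f) (((a*lam - b*mu*f)*w + b*mu)*u)
        (c*lam - d*mu*f) (((c*lam - d*mu*f)*w + d*mu)*u) =
        normSq u * aq (a*lam - b*mu*f) ((a*lam - b*mu*f)*w + b*mu)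
          (c*lam - d*mu*f) ((c*lam - d*mu*f)*w + d*mu) := by
      have h8 := Q3 (a*lam - b*mu*f) ((a*lam - b*mu*f)*w + b*mu)
        (c*lam - d*mu*f) ((c*lam - d*mu*f)*w + d*mu) 1 u
      rw [mul_one, mul_one, _root_.map_one, one_mul] at h8
      exact h8
    rw [e2, Q2, Q1, Q3, hα]
    have hNu : normSq d * normSq u = normSq (d - c*e) := by rw [← hdu, _root_.map_mul]
    have hNlm : normSq lam * normSq mu = 1 := by
      rw [normSq_norm, normSq_norm]
      calc ‖lam‖^2 * ‖mu‖^2 = (‖lam‖*‖mu‖)^2 := by ring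
      _ = 1 := by rw [hdetT]; norm_num
    rw [hNp, hNs, hNlm]
    -- goal: normSq d * normSq a * (normSq u * (1 * 1)) = 1
    have h9 : normSq a * (normSq d * normSq u) = 1 := by rw [hNu]; exact hαh
    linear_combination h9
  · -- b' bound
    have eb2 : b' = a * ((e*mu - lam*e) * s) := by
      rw [hb', hq, ← hae]; noncomm_ring
    have hnb : ‖b'‖^2 = normSq a * (normSq (lam*e - e*mu) * normSq a) := by
      rw [eb2, ← normSq_norm, _root_.map_mul, _root_.map_mul, hNs,
        show e*mu - lam*e = -(lam*e - e*mu) from (neg_sub _ _).symm, normSq_neg]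
    have hkb := key_bound lam mu e
    rw [← hK] at hkb
    have hNe : normSq e = normSq b / normSq a := by
      rw [normSq_norm, normSq_norm, normSq_norm, hEb]
      field_simp
    rw [hNe] at hkb
    have hKnn : 0 ≤ K := by
      rw [hK]; positivity
    calc ‖b'‖^2 = normSq (lam*e - e*mu) * (normSq a * normSq a) := by rw [hnb]; ring
      _ ≤ (K * (normSq b / normSq a)) * (normSq a * normSq a) := by
          apply mul_le_mul_of_nonneg_right hkb (by positivity)
      _ = K * (normSq b * normSq a) := by field_simp
      _ = K * (‖b‖^2 * ‖a‖^2) := by rw [normSq_norm, normSq_norm]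
  · -- c' bound
    have ec2 : c' = d * ((f*lam - mu*f) * p) := by
      rw [hc', hr, ← hdf]; noncomm_ring
    have hnc : ‖c'‖^2 = normSq d * (normSq (f*lam - mu*f) * normSq d) := by
      rw [ec2, ← normSq_norm, _root_.map_mul, _root_.map_mul, hNp]
    have hkb := key_bound mu lam f
    have hKsym : (mu.re - lam.re)^2 + (‖mu.im‖ + ‖lam.im‖)^2 = K := by rw [hK]; ring
    rw [hKsym] at hkb
    have hneg : normSq (f*lam - mu*f) = normSq (mu*f - f*lam) := by
      rw [show f*lam - mu*f = -(mu*f - f*lam) from (neg_sub _ _).symm, normSq_neg]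
    have hNf : normSq f = normSq c / normSq d := by
      rw [normSq_norm, normSq_norm, normSq_norm, hFc]
      field_simp
    rw [hNf] at hkb
    calc ‖c'‖^2 = normSq (f*lam - mu*f) * (normSq d * normSq d) := by rw [hnc]; ring
      _ = normSq (mu*f - f*lam) * (normSq d * normSq d) := by rw [hneg]
      _ ≤ (K * (normSq c / normSq d)) * (normSq d * normSq d) := by
          apply mul_le_mul_of_nonneg_right hkb (by positivity)
      _ = K * (normSq c * normSq d) := by field_simp
      _ = K * (‖c‖^2 * ‖d‖^2) := by rw [normSq_norm, normSq_norm]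
  · rw [ha']
    calc ‖a*lam*p + b*mu*r‖ ≤ ‖a*lam*p‖ + ‖b*mu*r‖ := norm_add_le _ _
      _ = ‖lam‖*(‖a‖*‖d‖) + ‖mu‖*(‖b‖*‖c‖) := by
          rw [norm_mul, norm_mul, norm_mul, norm_mul, hpd, hrc]; ring
  · rw [hd']
    calc ‖c*lam*q + d*mu*s‖ ≤ ‖c*lam*q‖ + ‖d*mu*s‖ := norm_add_le _ _
      _ = ‖mu‖*(‖a‖*‖d‖) + ‖lam‖*(‖b‖*‖c‖) := by
          rw [norm_mul, norm_mul, norm_mul, norm_mul, hsa, hqb]; ring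

abbrev M2 : Type := Matrix (Fin 2) (Fin 2) ℍ[ℝ]

lemma discrete_no_small (US UT : M2ˣ)
    (hdisc : DiscreteTopology
      ↥(Units.val '' ((Subgroup.closure {US, UT} : Subgroup M2ˣ) : Set M2ˣ)))
    (V : ℕ → M2ˣ) (hmem : ∀ k, V k ∈ Subgroup.closure {US, UT})
    (hne : ∀ k, V k ≠ 1)
    (hlim : Tendsto (fun k => (V k).val) atTop (nhds 1)) : False := by
  set Γ : Set M2 := Units.val '' ((Subgroup.closure {US, UT} : Subgroup M2ˣ) : Set M2ˣ) with hΓ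
  have h1 : (1 : M2) ∈ Γ := ⟨1, Subgroup.one_mem _, rfl⟩
  have hopen : IsOpen {(⟨1, h1⟩ : Γ)} := isOpen_discrete _
  rw [isOpen_induced_iff] at hopen
  obtain ⟨O, hO, hpre⟩ := hopen
  have h1O : (1 : M2) ∈ O := by
    have : (⟨1, h1⟩ : Γ) ∈ (Subtype.val ⁻¹' O : Set Γ) := by
      rw [hpre]; exact Set.mem_singleton _
    exact this
  have hev : ∀ᶠ k in atTop, (V k).val ∈ O := hlim.eventually (hO.mem_nhds h1O)
  obtain ⟨k, hk⟩ := hev.exists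
  have hmemΓ : (V k).val ∈ Γ := ⟨V k, hmem k, rfl⟩
  have hmem2 : (⟨(V k).val, hmemΓ⟩ : Γ) ∈ (Subtype.val ⁻¹' O : Set Γ) := hk
  rw [hpre] at hmem2
  have hval : (V k).val = 1 := congrArg Subtype.val (Set.mem_singleton_iff.mp hmem2)
  exact hne k (Units.ext hval)

lemma tail_endgame (US UT : M2ˣ)
    (hdisc : DiscreteTopology
      ↥(Units.val '' ((Subgroup.closure {US, UT} : Subgroup M2ˣ) : Set M2ˣ)))
    (W : ℕ → M2ˣ) (hmem : ∀ k, W k ∈ Subgroup.closure {US, UT})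
    (y : ℕ → ℝ) (hanti : StrictAnti y)
    (hyW : ∀ k, ‖(W k).val 0 1‖ * ‖(W k).val 1 0‖ = y k)
    (R : ℝ)
    (hR : ∀ k (i j : Fin 2), ‖(W k).val i j‖ ≤ R ∧ ‖((W k)⁻¹).val i j‖ ≤ R) : False := by
  classical
  set F : ℕ → (Fin 8 → ℍ[ℝ]) := fun k =>
    ![(W k).val 0 0, (W k).val 0 1, (W k).val 1 0, (W k).val 1 1,
      ((W k)⁻¹).val 0 0, ((W k)⁻¹).val 0 1, ((W k)⁻¹).val 1 0, ((W k)⁻¹).val 1 1] with hF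
  have hF0 : ∀ k, F k 0 = (W k).val 0 0 := fun _ => rfl
  have hF1 : ∀ k, F k 1 = (W k).val 0 1 := fun _ => rfl
  have hF2 : ∀ k, F k 2 = (W k).val 1 0 := fun _ => rfl
  have hF3 : ∀ k, F k 3 = (W k).val 1 1 := fun _ => rfl
  have hF4 : ∀ k, F k 4 = ((W k)⁻¹).val 0 0 := fun _ => rfl
  have hF5 : ∀ k, F k 5 = ((W k)⁻¹).val 0 1 := fun _ => rfl
  have hF6 : ∀ k, F k 6 = ((W k)⁻¹).val 1 0 := fun _ => rfl
  have hF7 : ∀ k, F k 7 = ((W k)⁻¹).val 1 1 := fun _ => rfl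
  have hR0 : 0 ≤ R := le_trans (norm_nonneg _) (hR 0 0 0).1
  have hFb : ∀ k, F k ∈ closedBall (0 : Fin 8 → ℍ[ℝ]) R := by
    intro k
    rw [mem_closedBall_iff_norm, sub_zero]
    apply (pi_norm_le_iff_of_nonneg hR0).mpr
    intro i
    fin_cases i
    · exact (hR k 0 0).1
    · exact (hR k 0 1).1
    · exact (hR k 1 0).1
    · exact (hR k 1 1).1
    · exact (hR k 0 0).2
    · exact (hR k 0 1).2
    · exact (hR k 1 0).2
    · exact (hR k 1 1).2
  obtain ⟨G, -, φ, hφ, hconv⟩ :=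
    tendsto_subseq_of_bounded (isBounded_closedBall (x := (0 : Fin 8 → ℍ[ℝ])) (r := R)) hFb
  have hcoord : ∀ i : Fin 8, Tendsto (fun k => F (φ k) i) atTop (nhds (G i)) :=
    fun i => (tendsto_pi_nhds.mp hconv) i
  set XW : M2 := !![G 0, G 1; G 2, G 3] with hXW
  set XV : M2 := !![G 4, G 5; G 6, G 7] with hXV
  have hXWe : ∀ i j : Fin 2, ∃ l : Fin 8,
      XW i j = G l ∧ (∀ k, (W k).val i j = F k l) := by
    intro i j
    fin_cases i <;> fin_cases j
    · exact ⟨0, rfl, fun k => (hF0 k).symm⟩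
    · exact ⟨1, rfl, fun k => (hF1 k).symm⟩
    · exact ⟨2, rfl, fun k => (hF2 k).symm⟩
    · exact ⟨3, rfl, fun k => (hF3 k).symm⟩
  have hXVe : ∀ i j : Fin 2, ∃ l : Fin 8,
      XV i j = G l ∧ (∀ k, ((W k)⁻¹).val i j = F k l) := by
    intro i j
    fin_cases i <;> fin_cases j
    · exact ⟨4, rfl, fun k => (hF4 k).symm⟩
    · exact ⟨5, rfl, fun k => (hF5 k).symm⟩
    · exact ⟨6, rfl, fun k => (hF6 k).symm⟩
    · exact ⟨7, rfl, fun k => (hF7 k).symm⟩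
  have hWlim : Tendsto (fun k => (W (φ k)).val) atTop (nhds XW) := by
    refine tendsto_pi_nhds.mpr ?_; intro i; rw [tendsto_pi_nhds]; intro j
    obtain ⟨l, hl1, hl2⟩ := hXWe i j
    rw [hl1]
    simpa only [hl2] using hcoord l
  have hVlim : Tendsto (fun k => ((W (φ k))⁻¹).val) atTop (nhds XV) := by
    refine tendsto_pi_nhds.mpr ?_; intro i; rw [tendsto_pi_nhds]; intro j
    obtain ⟨l, hl1, hl2⟩ := hXVe i j
    rw [hl1]
    simpa only [hl2] using hcoord l
  have hunit : XW * XV = 1 := by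
    have hprod : Tendsto (fun k => (W (φ k)).val * ((W (φ k))⁻¹).val) atTop (nhds (XW * XV)) :=
      hWlim.mul hVlim
    have hone : (fun k => (W (φ k)).val * ((W (φ k))⁻¹).val) = fun _ => (1 : M2) := by
      funext k
      rw [← Units.val_mul, mul_inv_cancel, Units.val_one]
    rw [hone] at hprod
    exact (tendsto_nhds_unique tendsto_const_nhds hprod).symm
  set V : ℕ → M2ˣ := fun k => W (φ k) * (W (φ (k+1)))⁻¹ with hV
  have hVmem : ∀ k, V k ∈ Subgroup.closure ({US, UT} : Set M2ˣ) :=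
    fun k => mul_mem (hmem _) (inv_mem (hmem _))
  have hVne : ∀ k, V k ≠ 1 := by
    intro k h1
    have hWeq : W (φ k) = W (φ (k+1)) := by
      rwa [hV, mul_inv_eq_one] at h1
    have heq : y (φ k) = y (φ (k+1)) := by
      rw [← hyW, ← hyW, hWeq]
    have hlt : y (φ (k+1)) < y (φ k) := hanti (hφ (by omega))
    linarith
  have hVtend : Tendsto (fun k => (V k).val) atTop (nhds 1) := by
    rw [← hunit]
    have h2 : Tendsto (fun k => ((W (φ (k+1)))⁻¹).val) atTop (nhds XV) :=
      hVlim.comp (tendsto_add_atTop_nat 1)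
    have h3 := hWlim.mul h2
    have h4 : (fun k => (V k).val) =
        fun k => (W (φ k)).val * ((W (φ (k+1)))⁻¹).val := by
      funext k
      rw [hV]
      exact Units.val_mul _ _
    rw [h4]
    exact h3
  exact discrete_no_small US UT hdisc V hVmem hVne hVtend

lemma balance (t : ℝ) (ht : 0 < t) (htne : t ≠ 1) (B z : ℝ) (hB : 0 < B) (hz : 0 < z) :
    ∃ m : ℤ, z ≤ t^((2:ℤ)*m) * B ∧ t^((2:ℤ)*m) * B ≤ (max (t^(2:ℤ)) (t^(-2:ℤ))) * z := by
  have htz : t ≠ 0 := ne_of_gt ht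
  rcases lt_or_gt_of_ne htne with hlt | hgt
  · have hy : 1 < t^(-2:ℤ) := by
      rw [show (-2:ℤ) = -(2:ℤ) by norm_num, _root_.zpow_neg, one_lt_inv_iff₀]
      refine ⟨by positivity, ?_⟩
      rw [show (2:ℤ) = ((2:ℕ):ℤ) by norm_num, zpow_natCast]
      exact pow_lt_one₀ (le_of_lt ht) hlt (by norm_num)
    obtain ⟨n, hn1, hn2⟩ := exists_mem_Ico_zpow (div_pos hz hB) hy
    refine ⟨-(n+1), ?_, ?_⟩
    · have h2 : z/B < (t^(-2:ℤ))^(n+1) := hn2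
      rw [← _root_.zpow_mul] at h2
      have h3 : (-2:ℤ) * (n+1) = 2 * -(n+1) := by ring
      rw [h3] at h2
      rw [div_lt_iff₀ hB] at h2
      linarith
    · have h2 : (t^(-2:ℤ))^n ≤ z/B := hn1
      have h4 : t^((2:ℤ) * -(n+1)) = t^(-2:ℤ) * (t^(-2:ℤ))^n := by
        rw [← _root_.zpow_mul, ← zpow_add₀ htz]
        congr 1
        ring
      rw [h4]
      have h5 : t^(-2:ℤ) * (t^(-2:ℤ))^n * B ≤ t^(-2:ℤ) * z := by
        rw [mul_assoc]
        apply mul_le_mul_of_nonneg_left _ (le_of_lt (by positivity : (0:ℝ) < t^(-2:ℤ)))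
        rw [← le_div_iff₀ hB]
        exact h2
      exact le_trans h5 (mul_le_mul_of_nonneg_right (le_max_right _ _) (le_of_lt hz))
  · have hy : 1 < t^(2:ℤ) := by
      rw [show (2:ℤ) = ((2:ℕ):ℤ) by norm_num, zpow_natCast]
      exact one_lt_pow₀ hgt (by norm_num)
    obtain ⟨n, hn1, hn2⟩ := exists_mem_Ico_zpow (div_pos hz hB) hy
    refine ⟨n+1, ?_, ?_⟩
    · have h2 : z/B < (t^(2:ℤ))^(n+1) := hn2
      rw [← _root_.zpow_mul] at h2
      rw [div_lt_iff₀ hB] at h2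
      linarith
    · have h2 : (t^(2:ℤ))^n ≤ z/B := hn1
      have h4 : t^((2:ℤ) * (n+1)) = t^(2:ℤ) * (t^(2:ℤ))^n := by
        rw [← _root_.zpow_mul, ← zpow_add₀ htz]
        congr 1
        ring
      rw [h4]
      have h5 : t^(2:ℤ) * (t^(2:ℤ))^n * B ≤ t^(2:ℤ) * z := by
        rw [mul_assoc]
        apply mul_le_mul_of_nonneg_left _ (le_of_lt (by positivity : (0:ℝ) < t^(2:ℤ)))
        rw [← le_div_iff₀ hB]
        exact h2
      exact le_trans h5 (mul_le_mul_of_nonneg_right (le_max_left _ _) (le_of_lt hz))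


lemma geom_to_zero (u g : ℕ → ℝ) (hu : ∀ n, 0 ≤ u n) (θ : ℝ) (hθ1 : θ < 1) (hθ0 : 0 ≤ θ)
    (hrec : ∀ n, u (n+1) ≤ g n * u n) (hgnn : ∀ n, 0 ≤ g n)
    (hg : ∀ᶠ n in atTop, g n ≤ θ) :
    Tendsto u atTop (nhds 0) := by
  obtain ⟨N, hN⟩ := eventually_atTop.mp hg
  have hind : ∀ i, u (N+i) ≤ θ^i * u N := by
    intro i
    induction i with
    | zero => simp
    | succ i ih =>
      have h1 : u (N+i+1) ≤ g (N+i) * u (N+i) := hrec _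
      have h2 : g (N+i) ≤ θ := hN _ (by omega)
      calc u (N+(i+1)) = u (N+i+1) := by ring_nf
        _ ≤ g (N+i) * u (N+i) := h1
        _ ≤ θ * (θ^i * u N) := by
            apply mul_le_mul h2 ih (hu _)
            exact hθ0
        _ = θ^(i+1) * u N := by ring
  have hgeo : Tendsto (fun i => θ^i * u N) atTop (nhds 0) := by
    have := (tendsto_pow_atTop_nhds_zero_of_lt_one hθ0 hθ1).mul_const (u N)
    simpa using this
  have hshift : Tendsto (fun i => u (N+i)) atTop (nhds 0) := by
    apply squeeze_zero (fun i => hu _) hind hgeo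
  have : Tendsto (fun i => u (i+N)) atTop (nhds 0) := by
    have heq : (fun i => u (i+N)) = fun i => u (N+i) := by funext i; ring_nf
    rw [heq]; exact hshift
  exact (tendsto_add_atTop_iff_nat N).mp this

lemma sq_tendsto_zero (u : ℕ → ℝ) (hu : ∀ n, 0 ≤ u n)
    (h : Tendsto (fun n => (u n)^2) atTop (nhds 0)) : Tendsto u atTop (nhds 0) := by
  have h2 : Tendsto (fun n => Real.sqrt ((u n)^2)) atTop (nhds (Real.sqrt 0)) :=
    (Real.continuous_sqrt.tendsto 0).comp h
  have heq : (fun n => Real.sqrt ((u n)^2)) = u := funext (fun n => Real.sqrt_sq (hu n))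
  rw [heq] at h2
  simpa using h2

lemma bdd_of_tendsto (u : ℕ → ℝ) (a : ℝ) (h : Tendsto u atTop (nhds a)) :
    ∃ R : ℝ, ∀ n, u n ≤ R := by
  obtain ⟨R, hR⟩ := h.bddAbove_range
  exact ⟨R, fun n => hR (Set.mem_range_self n)⟩

lemma mat2_eq {x y z w x' y' z' w' : ℍ[ℝ]} (h : (!![x,y;z,w] : M2) = !![x',y';z',w']) :
    x = x' ∧ y = y' ∧ z = z' ∧ w = w' := by
  have h00 := Matrix.ext_iff.mpr h 0 0
  have h01 := Matrix.ext_iff.mpr h 0 1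
  have h10 := Matrix.ext_iff.mpr h 1 0
  have h11 := Matrix.ext_iff.mpr h 1 1
  exact ⟨h00, h01, h10, h11⟩

set_option maxHeartbeats 4000000 in
/-- extremality propagates along the Shimizu–Leutbecher sequence:
if `K(1 + |bc|) = 1` then `K(1 + |b_n c_n|) = 1` for all `n`. -/
theorem quaternion_jorgensen_extremal_propagation (a b c d lam mu : ℍ[ℝ])
    (S T : Matrix (Fin 2) (Fin 2) ℍ[ℝ])
    (hS : S = !![a, b; c, d]) (hT : T = !![lam, 0; 0, mu])
    (hαS : ‖a‖ ^ 2 * ‖d‖ ^ 2 + ‖b‖ ^ 2 * ‖c‖ ^ 2 - 2 * (a * star c * d * star b).re = 1)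
    (hdetT : ‖lam‖ * ‖mu‖ = 1)
    (hsim : ¬ ∃ q : ℍ[ℝ], q ≠ 0 ∧ mu = q * lam * q⁻¹)
    (US UT : (Matrix (Fin 2) (Fin 2) ℍ[ℝ])ˣ)
    (hUS : Units.val US = S) (hUT : Units.val UT = T)
    (hdisc : DiscreteTopology
      ↥(Units.val '' ((Subgroup.closure {US, UT} :
          Subgroup (Matrix (Fin 2) (Fin 2) ℍ[ℝ])ˣ) : Set (Matrix (Fin 2) (Fin 2) ℍ[ℝ])ˣ)))
    (U : ℕ → (Matrix (Fin 2) (Fin 2) ℍ[ℝ])ˣ)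
    (hU0 : U 0 = US)
    (hUrec : ∀ n, U (n + 1) = U n * UT * (U n)⁻¹)
    (aN bN cN dN : ℕ → ℍ[ℝ])
    (hUn : ∀ n, Units.val (U n) = !![aN n, bN n; cN n, dN n])
    (hbc : ∀ n, bN n * cN n ≠ 0)
    (K : ℝ)
    (hK : K = (lam.re - mu.re) ^ 2 + (‖lam.im‖ + ‖mu.im‖) ^ 2)
    (hext : K * (1 + ‖b * c‖) = 1) :
    ∀ n, K * (1 + ‖bN n * cN n‖) = 1 := by
  classical
  -- inverse entries
  obtain ⟨pN, qN, rN, sN, hPn⟩ : ∃ p q r s : ℕ → ℍ[ℝ],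
      ∀ n, ((U n)⁻¹).val = !![p n, q n; r n, s n] :=
    ⟨_, _, _, _, fun n => Matrix.eta_fin_two _⟩
  -- relations from U * U⁻¹ = 1
  have hrel : ∀ n, aN n * pN n + bN n * rN n = 1 ∧ aN n * qN n + bN n * sN n = 0 ∧
      cN n * pN n + dN n * rN n = 0 ∧ cN n * qN n + dN n * sN n = 1 := by
    intro n
    have h0 : (U n).val * ((U n)⁻¹).val = 1 := Units.mul_inv (U n)
    rw [hUn n, hPn n, Matrix.mul_fin_two, Matrix.one_fin_two] at h0
    obtain ⟨e1, e2, e3, e4⟩ := mat2_eq h0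
    exact ⟨e1, e2, e3, e4⟩
  -- recursion entry formulas
  have hent : ∀ n, aN (n+1) = aN n * lam * pN n + bN n * mu * rN n ∧
      bN (n+1) = aN n * lam * qN n + bN n * mu * sN n ∧
      cN (n+1) = cN n * lam * pN n + dN n * mu * rN n ∧
      dN (n+1) = cN n * lam * qN n + dN n * mu * sN n := by
    intro n
    have h0 : (U (n+1)).val = (U n).val * UT.val * ((U n)⁻¹).val := by
      rw [hUrec n, Units.val_mul, Units.val_mul]
    rw [hUn (n+1), hUn n, hUT, hT, hPn n, Matrix.mul_fin_two, Matrix.mul_fin_two] at h0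
    simp only [mul_zero, zero_mul, add_zero, zero_add] at h0
    obtain ⟨e1, e2, e3, e4⟩ := mat2_eq h0
    exact ⟨e1, e2, e3, e4⟩
  have hbne : ∀ n, bN n ≠ 0 := fun n => left_ne_zero_of_mul (hbc n)
  have hcne : ∀ n, cN n ≠ 0 := fun n => right_ne_zero_of_mul (hbc n)
  -- aN n ≠ 0 and dN n ≠ 0
  have had : ∀ n, aN n ≠ 0 ∧ dN n ≠ 0 := by
    intro n
    constructor
    · intro h0
      have hb0 : bN (n+1) = 0 :=
        step_zero_b (aN n) (bN n) (qN n) (sN n) (bN (n+1)) lam mu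
          (hrel n).2.1 (hent n).2.1 h0 (hbne n)
      exact hbne (n+1) hb0
    · intro h0
      have hc0 : cN (n+1) = 0 :=
        step_zero_c (cN n) (dN n) (pN n) (rN n) (cN (n+1)) lam mu
          (hrel n).2.2.1 (hent n).2.2.1 h0 (hcne n)
      exact hcne (n+1) hc0
  -- initial entry identification
  have hinit : aN 0 = a ∧ bN 0 = b ∧ cN 0 = c ∧ dN 0 = d := by
    have h0 : (!![aN 0, bN 0; cN 0, dN 0] : M2) = !![a,b;c,d] := by
      rw [← hUn 0, hU0, hUS, hS]
    exact mat2_eq h0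
  -- alpha invariant
  have hα : ∀ n, aq (aN n) (bN n) (cN n) (dN n) = 1 := by
    intro n
    induction n with
    | zero =>
      rw [aq_norm, hinit.1, hinit.2.1, hinit.2.2.1, hinit.2.2.2]
      exact hαS
    | succ n ih =>
      exact (step_main lam mu K hK hdetT (aN n) (bN n) (cN n) (dN n)
        (pN n) (qN n) (rN n) (sN n) (aN (n+1)) (bN (n+1)) (cN (n+1)) (dN (n+1))
        (hrel n).1 (hrel n).2.1 (hrel n).2.2.1 (hrel n).2.2.2
        (hent n).1 (hent n).2.1 (hent n).2.2.1 (hent n).2.2.2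
        ih (had n).1 (had n).2).2.2.2.2.1
  have hstepAll := fun n => step_main lam mu K hK hdetT (aN n) (bN n) (cN n) (dN n)
        (pN n) (qN n) (rN n) (sN n) (aN (n+1)) (bN (n+1)) (cN (n+1)) (dN (n+1))
        (hrel n).1 (hrel n).2.1 (hrel n).2.2.1 (hrel n).2.2.2
        (hent n).1 (hent n).2.1 (hent n).2.2.1 (hent n).2.2.2
        (hα n) (had n).1 (had n).2
  -- the basic real sequence
  obtain ⟨x, hxdef⟩ : ∃ x : ℕ → ℝ, ∀ n, x n = ‖bN n‖ * ‖cN n‖ := ⟨_, fun _ => rfl⟩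
  have hxpos : ∀ n, 0 < x n := fun n => by
    rw [hxdef]
    exact mul_pos (norm_pos_iff.mpr (hbne n)) (norm_pos_iff.mpr (hcne n))
  have hADle : ∀ n, ‖aN n‖ * ‖dN n‖ ≤ 1 + x n := fun n => by
    rw [hxdef]
    exact (ad_bounds _ _ _ _ (hα n)).1
  have hx0 : K * (1 + x 0) = 1 := by
    have h9 : x 0 = ‖b * c‖ := by
      rw [hxdef 0, hinit.2.1, hinit.2.2.1, norm_mul]
    rw [h9]; exact hext
  have hKpos : 0 < K := by nlinarith [hxpos 0]
  have hK1 : K < 1 := by nlinarith [hxpos 0]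
  have hxstep : ∀ n, x (n+1) ≤ K * (x n * (1 + x n)) := by
    intro n
    have hb2 := (hstepAll n).2.2.2.2.2.1
    have hc2 := (hstepAll n).2.2.2.2.2.2.1
    have hsq : (x (n+1))^2 ≤ (K * (x n * (1 + x n)))^2 := by
      have h1 : (x (n+1))^2 = ‖bN (n+1)‖^2 * ‖cN (n+1)‖^2 := by rw [hxdef]; ring
      have h2 : ‖bN (n+1)‖^2 * ‖cN (n+1)‖^2 ≤
          (K * (‖bN n‖^2 * ‖aN n‖^2)) * (K * (‖cN n‖^2 * ‖dN n‖^2)) := by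
        apply mul_le_mul hb2 hc2 (by positivity) (mul_nonneg hKpos.le (by positivity))
      have h3 : (K * (‖bN n‖^2 * ‖aN n‖^2)) * (K * (‖cN n‖^2 * ‖dN n‖^2)) =
          (K * (x n))^2 * (‖aN n‖*‖dN n‖)^2 := by rw [hxdef]; ring
      have h4 : (K * x n)^2 * (‖aN n‖*‖dN n‖)^2 ≤ (K * x n)^2 * (1 + x n)^2 := by
        apply mul_le_mul_of_nonneg_left _ (by positivity)
        have h7 := hADle n
        have hnn : 0 ≤ ‖aN n‖*‖dN n‖ := by positivity
        exact pow_le_pow_left₀ hnn h7 2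
      calc (x (n+1))^2 = ‖bN (n+1)‖^2 * ‖cN (n+1)‖^2 := h1
        _ ≤ _ := h2
        _ = (K * (x n))^2 * (‖aN n‖*‖dN n‖)^2 := h3
        _ ≤ (K * x n)^2 * (1 + x n)^2 := h4
        _ = (K * (x n * (1 + x n)))^2 := by ring
    have h5 : 0 ≤ x (n+1) := le_of_lt (hxpos _)
    have h6 : 0 ≤ K * (x n * (1 + x n)) := by
      have h7 := hxpos n
      exact mul_nonneg hKpos.le (mul_nonneg h7.le (by linarith))
    exact (pow_le_pow_iff_left₀ h5 h6 (by norm_num)).mp hsq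
  have hxle : ∀ n, x n ≤ x 0 := by
    intro n
    induction n with
    | zero => exact le_rfl
    | succ n ih =>
      have h0 := hxstep n
      have h1 : x n * (1 + x n) ≤ x 0 * (1 + x 0) :=
        mul_le_mul ih (by linarith) (by linarith [hxpos n]) (by linarith [hxpos 0])
      have h2 : K * (x n * (1 + x n)) ≤ K * (x 0 * (1 + x 0)) :=
        mul_le_mul_of_nonneg_left h1 hKpos.le
      have h3 : K * (x 0 * (1 + x 0)) = x 0 := by linear_combination (x 0) * hx0
      linarith
  -- final goal reduction: suffices x n = x 0 for all n
  suffices hfin : ∀ n, x n = x 0 by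
    intro n
    have h9 : ‖bN n * cN n‖ = x n := by rw [norm_mul, hxdef]
    rw [h9, hfin n]
    exact hx0
  by_contra hbad
  push_neg at hbad
  have hex : ∃ n, x n ≠ x 0 := hbad
  set n₁ := Nat.find hex with hn₁
  have hspec : x n₁ ≠ x 0 := Nat.find_spec hex
  have hprev : ∀ m < n₁, x m = x 0 := fun m hm => not_not.mp (Nat.find_min hex hm)
  have hn₁pos : n₁ ≠ 0 := by
    intro h0
    rw [h0] at hspec
    exact hspec rfl
  obtain ⟨m₀, hm₀⟩ := Nat.exists_eq_succ_of_ne_zero hn₁pos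
  have hxm : x m₀ = x 0 := hprev m₀ (by omega)
  have hxlt : x n₁ < x 0 := by
    have h1 : x n₁ ≤ x 0 := by
      rw [hm₀]
      have h2 := hxstep m₀
      rw [hxm] at h2
      have h3 : K * (x 0 * (1 + x 0)) = x 0 := by linear_combination (x 0) * hx0
      linarith
    exact lt_of_le_of_ne h1 hspec
  have hkey : ∀ z : ℝ, 0 < z → z < x 0 → K * (z * (1+z)) < z := by
    intro z h1 h2
    have h3 : K * (1+z) < 1 := by nlinarith [hx0, hKpos]
    have h4 : z * (K * (1+z)) < z * 1 := mul_lt_mul_of_pos_left h3 h1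
    nlinarith [h4]
  have hdec : ∀ k, x (n₁ + k) < x 0 ∧ x (n₁ + k + 1) < x (n₁ + k) := by
    intro k
    induction k with
    | zero =>
      refine ⟨hxlt, ?_⟩
      have h1 := hxstep n₁
      have h2 := hkey (x n₁) (hxpos n₁) hxlt
      have : x (n₁ + 0) = x n₁ := rfl
      rw [this]
      calc x (n₁ + 0 + 1) = x (n₁ + 1) := rfl
        _ ≤ K * (x n₁ * (1 + x n₁)) := h1
        _ < x n₁ := h2
    | succ k ih =>
      have h0 : x (n₁ + (k+1)) = x (n₁ + k + 1) := rfl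
      have h1 : x (n₁ + (k+1)) < x 0 := by rw [h0]; exact lt_trans ih.2 ih.1
      refine ⟨h1, ?_⟩
      have h2 := hxstep (n₁ + (k+1))
      have h3 := hkey (x (n₁ + (k+1))) (hxpos _) h1
      calc x (n₁ + (k+1) + 1) ≤ K * (x (n₁ + (k+1)) * (1 + x (n₁ + (k+1)))) := h2
        _ < x (n₁ + (k+1)) := h3
  obtain ⟨y, hy⟩ : ∃ y : ℕ → ℝ, ∀ k, y k = x (n₁ + k) := ⟨_, fun _ => rfl⟩
  have hyanti : StrictAnti y := by
    apply strictAnti_nat_of_succ_lt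
    intro k
    rw [hy, hy]
    exact (hdec k).2
  have hypos : ∀ k, 0 < y k := fun k => by rw [hy]; exact hxpos _
  have hylt : ∀ k, y k < x 0 := fun k => by rw [hy]; exact (hdec k).1
  have hyle0 : ∀ k, y k ≤ x 0 := fun k => (hylt k).le
  have hbdd : BddBelow (Set.range y) := by
    refine ⟨0, ?_⟩
    rintro z ⟨k, rfl⟩
    exact (hypos k).le
  have hmono : Antitone y := hyanti.antitone
  have hLt : Tendsto y atTop (nhds (⨅ k, y k)) := tendsto_atTop_ciInf hmono hbdd
  have hL0 : 0 ≤ ⨅ k, y k := le_ciInf fun k => (hypos k).le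
  have hLlt : (⨅ k, y k) < x 0 := lt_of_le_of_lt (ciInf_le hbdd 0) (hylt 0)
  have hrecy : ∀ k, y (k+1) ≤ K * (y k * (1 + y k)) := by
    intro k
    rw [hy, hy]
    exact hxstep (n₁ + k)
  have hLle : (⨅ k, y k) ≤ K * ((⨅ k, y k) * (1 + (⨅ k, y k))) := by
    have hshift : Tendsto (fun k => y (k+1)) atTop (nhds (⨅ k, y k)) :=
      hLt.comp (tendsto_add_atTop_nat 1)
    have hRHS : Tendsto (fun k => K * (y k * (1 + y k))) atTop
        (nhds (K * ((⨅ k, y k) * (1 + (⨅ k, y k))))) :=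
      (hLt.mul (tendsto_const_nhds.add hLt)).const_mul K
    exact le_of_tendsto_of_tendsto' hshift hRHS hrecy
  have hLeq : (⨅ k, y k) = 0 := by
    by_contra hne0
    have hLpos : 0 < ⨅ k, y k := lt_of_le_of_ne hL0 (Ne.symm hne0)
    have h2 : K * (⨅ k, y k) * (⨅ k, y k) < K * (⨅ k, y k) * (x 0) :=
      mul_lt_mul_of_pos_left hLlt (mul_pos hKpos hLpos)
    have h3 : K * (⨅ k, y k) + K * (⨅ k, y k) * (x 0) = (⨅ k, y k) := by
      linear_combination (⨅ k, y k) * hx0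
    have h4 : K * ((⨅ k, y k) * (1 + (⨅ k, y k))) =
        K * (⨅ k, y k) + K * (⨅ k, y k) * (⨅ k, y k) := by ring
    linarith
  have hyto0 : Tendsto y atTop (nhds 0) := by rw [← hLeq]; exact hLt
  have hxfull : Tendsto x atTop (nhds 0) := by
    have heq : (fun n => x (n + n₁)) = y := by
      funext n
      rw [hy n, Nat.add_comm]
    rw [← tendsto_add_atTop_iff_nat n₁, heq]
    exact hyto0
  -- basic constants
  have hlamne : ‖lam‖ ≠ 0 := by
    intro h0; rw [h0, zero_mul] at hdetT; exact zero_ne_one hdetT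
  have htpos : 0 < ‖lam‖ := lt_of_le_of_ne (norm_nonneg lam) (Ne.symm hlamne)
  have hlam0 : lam ≠ 0 := norm_ne_zero_iff.mp hlamne
  have hmune : ‖mu‖ ≠ 0 := by
    intro h0; rw [h0, mul_zero] at hdetT; exact zero_ne_one hdetT
  have hmu0 : mu ≠ 0 := norm_ne_zero_iff.mp hmune
  have hmut : ‖mu‖ = ‖lam‖⁻¹ := eq_inv_of_mul_eq_one_right hdetT
  have hAbound : ∀ n, ‖aN (n+1)‖ ≤ ‖lam‖*(‖aN n‖*‖dN n‖) + ‖mu‖*(‖bN n‖*‖cN n‖) :=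
    fun n => (hstepAll n).2.2.2.2.2.2.2.1
  have hDbound : ∀ n, ‖dN (n+1)‖ ≤ ‖mu‖*(‖aN n‖*‖dN n‖) + ‖lam‖*(‖bN n‖*‖cN n‖) :=
    fun n => (hstepAll n).2.2.2.2.2.2.2.2
  -- uniform bounds on diagonal entries
  obtain ⟨RA, hRA0, hRAb⟩ : ∃ RA : ℝ, 0 ≤ RA ∧ ∀ n, ‖aN n‖ ≤ RA := by
    refine ⟨max (‖aN 0‖) (‖lam‖*(1+x 0) + ‖mu‖*(x 0)),
      le_trans (norm_nonneg (aN 0)) (le_max_left _ _), ?_⟩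
    intro n
    cases n with
    | zero => exact le_max_left _ _
    | succ n =>
      refine le_trans ?_ (le_max_right _ _)
      have h1 := hAbound n
      have h2 := hADle n
      have h3 := hxle n
      have h4 := (hxpos n).le
      have h5 : ‖bN n‖ * ‖cN n‖ = x n := (hxdef n).symm
      rw [h5] at h1
      have e1 : ‖lam‖*(‖aN n‖*‖dN n‖) ≤ ‖lam‖*(1+x 0) :=
        mul_le_mul_of_nonneg_left (by linarith) (norm_nonneg lam)
      have e2 : ‖mu‖*(x n) ≤ ‖mu‖*(x 0) := mul_le_mul_of_nonneg_left h3 (norm_nonneg mu)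
      linarith
  obtain ⟨RD, hRD0, hRDb⟩ : ∃ RD : ℝ, 0 ≤ RD ∧ ∀ n, ‖dN n‖ ≤ RD := by
    refine ⟨max (‖dN 0‖) (‖mu‖*(1+x 0) + ‖lam‖*(x 0)),
      le_trans (norm_nonneg (dN 0)) (le_max_left _ _), ?_⟩
    intro n
    cases n with
    | zero => exact le_max_left _ _
    | succ n =>
      refine le_trans ?_ (le_max_right _ _)
      have h1 := hDbound n
      have h2 := hADle n
      have h3 := hxle n
      have h4 := (hxpos n).le
      have h5 : ‖bN n‖ * ‖cN n‖ = x n := (hxdef n).symm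
      rw [h5] at h1
      have e1 : ‖mu‖*(‖aN n‖*‖dN n‖) ≤ ‖mu‖*(1+x 0) :=
        mul_le_mul_of_nonneg_left (by linarith) (norm_nonneg mu)
      have e2 : ‖lam‖*(x n) ≤ ‖lam‖*(x 0) := mul_le_mul_of_nonneg_left h3 (norm_nonneg lam)
      linarith
  -- membership in the subgroup
  have hUTmem : UT ∈ Subgroup.closure ({US, UT} : Set (Matrix (Fin 2) (Fin 2) ℍ[ℝ])ˣ) :=
    Subgroup.subset_closure (Set.mem_insert_of_mem _ rfl)
  have hUmem : ∀ n, U n ∈ Subgroup.closure ({US, UT} : Set (Matrix (Fin 2) (Fin 2) ℍ[ℝ])ˣ) := by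
    intro n
    induction n with
    | zero => rw [hU0]; exact Subgroup.subset_closure (Set.mem_insert _ _)
    | succ n ih => rw [hUrec]; exact mul_mem (mul_mem ih hUTmem) (inv_mem ih)
  -- powers of UT
  have hUTval : UT.val = !![lam, 0; 0, mu] := by rw [hUT, hT]
  have hUTinv : (UT⁻¹).val = !![lam⁻¹, 0; 0, mu⁻¹] := by
    have h7 : UT.val * !![lam⁻¹,0;0,mu⁻¹] = 1 := by
      rw [hUTval, Matrix.mul_fin_two, Matrix.one_fin_two]
      simp [mul_inv_cancel₀ hlam0, mul_inv_cancel₀ hmu0]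
    calc (UT⁻¹).val = (UT⁻¹).val * 1 := (mul_one _).symm
      _ = (UT⁻¹).val * (UT.val * !![lam⁻¹,0;0,mu⁻¹]) := by rw [h7]
      _ = ((UT⁻¹).val * UT.val) * !![lam⁻¹,0;0,mu⁻¹] := (mul_assoc _ _ _).symm
      _ = !![lam⁻¹,0;0,mu⁻¹] := by rw [Units.inv_mul, one_mul]
  have hTz : ∀ mm : ℤ, (UT^mm).val = !![lam^mm, 0; 0, mu^mm] := by
    intro mm
    induction mm using Int.induction_on with
    | zero => simp [Matrix.one_fin_two]
    | succ n ih =>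
      rw [_root_.zpow_add_one, Units.val_mul, ih, hUTval, Matrix.mul_fin_two]
      simp only [mul_zero, zero_mul, add_zero, zero_add]
      rw [← zpow_add_one₀ hlam0, ← zpow_add_one₀ hmu0]
    | pred n ih =>
      rw [_root_.zpow_sub_one, Units.val_mul, ih, hUTinv, Matrix.mul_fin_two]
      simp only [mul_zero, zero_mul, add_zero, zero_add]
      rw [← zpow_sub_one₀ hlam0, ← zpow_sub_one₀ hmu0]
  -- norm conjugation lemmas
  have hconj1 : ∀ (mm : ℤ) (v : ℍ[ℝ]), ‖lam^mm * v * lam^(-mm)‖ = ‖v‖ := by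
    intro mm v
    rw [norm_mul, norm_mul, norm_zpow, norm_zpow, _root_.zpow_neg,
      mul_comm (‖lam‖^mm) ‖v‖, mul_assoc, mul_inv_cancel₀ (zpow_pos htpos mm).ne', mul_one]
  have hmuz : ∀ mm : ℤ, ‖mu^mm‖ = (‖lam‖^mm)⁻¹ := by
    intro mm; rw [norm_zpow, hmut, _root_.inv_zpow]
  have hconj2 : ∀ (mm : ℤ) (v : ℍ[ℝ]), ‖mu^mm * v * mu^(-mm)‖ = ‖v‖ := by
    intro mm v
    rw [norm_mul, norm_mul, hmuz, hmuz, _root_.zpow_neg, inv_inv,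
      mul_comm ((‖lam‖^mm)⁻¹) ‖v‖, mul_assoc, inv_mul_cancel₀ (zpow_pos htpos mm).ne', mul_one]
  have hcross1 : ∀ (mm : ℤ) (v : ℍ[ℝ]), ‖lam^mm * v * mu^(-mm)‖ = ‖lam‖^((2:ℤ)*mm) * ‖v‖ := by
    intro mm v
    rw [norm_mul, norm_mul, norm_zpow, hmuz, _root_.zpow_neg, inv_inv,
      show (2:ℤ)*mm = mm + mm by ring, zpow_add₀ (ne_of_gt htpos)]
    ring
  have hcross2 : ∀ (mm : ℤ) (v : ℍ[ℝ]), ‖mu^mm * v * lam^(-mm)‖ = (‖lam‖^((2:ℤ)*mm))⁻¹ * ‖v‖ := by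
    intro mm v
    rw [norm_mul, norm_mul, hmuz, norm_zpow, _root_.zpow_neg,
      show (2:ℤ)*mm = mm + mm by ring, zpow_add₀ (ne_of_gt htpos), mul_inv]
    ring
  -- produce conjugation exponents with uniform off-diagonal bounds
  obtain ⟨m, Rβ, Rγ, hRβ0, hRγ0, hβk, hγk⟩ :
      ∃ (m : ℕ → ℤ) (Rβ Rγ : ℝ), 0 ≤ Rβ ∧ 0 ≤ Rγ ∧
        (∀ k, ‖lam‖^((2:ℤ)*(m k)) * ‖bN (n₁+k)‖ ≤ Rβ) ∧
        (∀ k, (‖lam‖^((2:ℤ)*(m k)))⁻¹ * ‖cN (n₁+k)‖ ≤ Rγ) := by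
    by_cases htone : ‖lam‖ = 1
    · -- elliptic-type case: b and c entries tend to zero themselves
      have hmuone : ‖mu‖ = 1 := by rw [hmut, htone]; norm_num
      have hA1 : ∀ n, ‖aN (n+1)‖ ≤ 1 + 2*x n := by
        intro n
        have h1 := hAbound n
        rw [htone, hmuone] at h1
        have h5 : ‖bN n‖ * ‖cN n‖ = x n := (hxdef n).symm
        rw [h5] at h1
        have h2 := hADle n
        linarith
      have hD1 : ∀ n, ‖dN (n+1)‖ ≤ 1 + 2*x n := by
        intro n
        have h1 := hDbound n
        rw [htone, hmuone] at h1
        have h5 : ‖bN n‖ * ‖cN n‖ = x n := (hxdef n).symm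
        rw [h5] at h1
        have h2 := hADle n
        linarith
      have hθ1 : (1+K)/2 < 1 := by linarith
      have hθ0 : 0 ≤ (1+K)/2 := by linarith
      have hgev : ∀ᶠ n in atTop, K*(1+2*x n)^2 ≤ (1+K)/2 := by
        have hcont : Tendsto (fun n => K*(1+2*x n)^2) atTop (nhds (K*(1+2*(0:ℝ))^2)) :=
          ((tendsto_const_nhds.add (hxfull.const_mul 2)).pow 2).const_mul K
        have hlt : K*(1+2*(0:ℝ))^2 < (1+K)/2 := by norm_num; linarith
        exact (hcont.eventually_lt_const hlt).mono (fun n h => h.le)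
      have hgnn : ∀ n, 0 ≤ K*(1+2*x n)^2 := fun n => mul_nonneg hKpos.le (sq_nonneg _)
      have hb2 : Tendsto (fun n => ‖bN (n+1)‖^2) atTop (nhds 0) := by
        apply geom_to_zero _ (fun n => K*(1+2*x n)^2) (fun n => sq_nonneg _) _ hθ1 hθ0 _ hgnn hgev
        intro n
        have u1 := (hstepAll (n+1)).2.2.2.2.2.1
        have u3 : ‖aN (n+1)‖^2 ≤ (1+2*x n)^2 :=
          pow_le_pow_left₀ (norm_nonneg _) (hA1 n) 2
        calc ‖bN (n+1+1)‖^2 ≤ K * (‖bN (n+1)‖^2 * ‖aN (n+1)‖^2) := u1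
          _ ≤ K * (‖bN (n+1)‖^2 * (1+2*x n)^2) := by
              apply mul_le_mul_of_nonneg_left _ hKpos.le
              exact mul_le_mul_of_nonneg_left u3 (sq_nonneg _)
          _ = (K*(1+2*x n)^2) * ‖bN (n+1)‖^2 := by ring
      have hc2 : Tendsto (fun n => ‖cN (n+1)‖^2) atTop (nhds 0) := by
        apply geom_to_zero _ (fun n => K*(1+2*x n)^2) (fun n => sq_nonneg _) _ hθ1 hθ0 _ hgnn hgev
        intro n
        have u1 := (hstepAll (n+1)).2.2.2.2.2.2.1
        have u3 : ‖dN (n+1)‖^2 ≤ (1+2*x n)^2 :=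
          pow_le_pow_left₀ (norm_nonneg _) (hD1 n) 2
        calc ‖cN (n+1+1)‖^2 ≤ K * (‖cN (n+1)‖^2 * ‖dN (n+1)‖^2) := u1
          _ ≤ K * (‖cN (n+1)‖^2 * (1+2*x n)^2) := by
              apply mul_le_mul_of_nonneg_left _ hKpos.le
              exact mul_le_mul_of_nonneg_left u3 (sq_nonneg _)
          _ = (K*(1+2*x n)^2) * ‖cN (n+1)‖^2 := by ring
      have hbfull : Tendsto (fun n => ‖bN n‖) atTop (nhds 0) := by
        have hb1 := sq_tendsto_zero (fun n => ‖bN (n+1)‖) (fun n => norm_nonneg _) hb2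
        exact (tendsto_add_atTop_iff_nat 1).mp hb1
      have hcfull : Tendsto (fun n => ‖cN n‖) atTop (nhds 0) := by
        have hc1 := sq_tendsto_zero (fun n => ‖cN (n+1)‖) (fun n => norm_nonneg _) hc2
        exact (tendsto_add_atTop_iff_nat 1).mp hc1
      obtain ⟨Rb, hRb⟩ := bdd_of_tendsto _ _ hbfull
      obtain ⟨Rc, hRc⟩ := bdd_of_tendsto _ _ hcfull
      refine ⟨fun _ => 0, max Rb 0, max Rc 0, le_max_right _ _, le_max_right _ _, ?_, ?_⟩
      · intro k
        have he : ‖lam‖^((2:ℤ)*(0:ℤ)) = 1 := by norm_num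
        rw [he, one_mul]
        exact le_trans (hRb _) (le_max_left _ _)
      · intro k
        have he : ‖lam‖^((2:ℤ)*(0:ℤ)) = 1 := by norm_num
        rw [he, inv_one, one_mul]
        exact le_trans (hRc _) (le_max_left _ _)
    · -- loxodromic-type case: rebalance with powers of T
      have hbal := fun k => balance (‖lam‖) htpos htone (‖bN (n₁+k)‖) (Real.sqrt (y k))
        (norm_pos_iff.mpr (hbne _)) (Real.sqrt_pos.mpr (hypos k))
      choose m hm1 hm2 using hbal
      have hMM0 : 0 ≤ max (‖lam‖^(2:ℤ)) (‖lam‖^(-2:ℤ)) :=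
        le_trans (zpow_pos htpos 2).le (le_max_left _ _)
      refine ⟨m, (max (‖lam‖^(2:ℤ)) (‖lam‖^(-2:ℤ))) * Real.sqrt (x 0), Real.sqrt (x 0),
        mul_nonneg hMM0 (Real.sqrt_nonneg _), Real.sqrt_nonneg _, ?_, ?_⟩
      · intro k
        have h1 := hm2 k
        have h2 : Real.sqrt (y k) ≤ Real.sqrt (x 0) := Real.sqrt_le_sqrt (hyle0 k)
        have h3 : (max (‖lam‖^(2:ℤ)) (‖lam‖^(-2:ℤ))) * Real.sqrt (y k) ≤
            (max (‖lam‖^(2:ℤ)) (‖lam‖^(-2:ℤ))) * Real.sqrt (x 0) :=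
          mul_le_mul_of_nonneg_left h2 hMM0
        linarith
      · intro k
        have hβpos : 0 < ‖lam‖^((2:ℤ)*(m k)) * ‖bN (n₁+k)‖ :=
          mul_pos (zpow_pos htpos _) (norm_pos_iff.mpr (hbne _))
        have h1 := hm1 k
        have hprod : (‖lam‖^((2:ℤ)*(m k)))⁻¹ * ‖cN (n₁+k)‖ =
            y k / (‖lam‖^((2:ℤ)*(m k)) * ‖bN (n₁+k)‖) := by
          rw [hy k, hxdef]
          have hb0' : ‖bN (n₁+k)‖ ≠ 0 := norm_ne_zero_iff.mpr (hbne _)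
          have ht0' : ‖lam‖^((2:ℤ)*(m k)) ≠ 0 := (zpow_pos htpos _).ne'
          field_simp
        rw [hprod]
        have h2 : y k / (‖lam‖^((2:ℤ)*(m k)) * ‖bN (n₁+k)‖) ≤ y k / Real.sqrt (y k) :=
          div_le_div_of_nonneg_left (hypos k).le (Real.sqrt_pos.mpr (hypos k)) h1
        have h3 : y k / Real.sqrt (y k) = Real.sqrt (y k) := Real.div_sqrt
        have h4 : Real.sqrt (y k) ≤ Real.sqrt (x 0) := Real.sqrt_le_sqrt (hyle0 k)
        linarith
  -- conjugated sequence W and endgame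
  obtain ⟨W, hW⟩ : ∃ W : ℕ → (Matrix (Fin 2) (Fin 2) ℍ[ℝ])ˣ,
      ∀ k, W k = UT^(m k) * U (n₁+k) * (UT^(m k))⁻¹ := ⟨_, fun _ => rfl⟩
  have hWval : ∀ k, (W k).val =
      !![lam^(m k) * aN (n₁+k) * lam^(-(m k)), lam^(m k) * bN (n₁+k) * mu^(-(m k));
         mu^(m k) * cN (n₁+k) * lam^(-(m k)), mu^(m k) * dN (n₁+k) * mu^(-(m k))] := by
    intro k
    rw [hW k, Units.val_mul, Units.val_mul, ← _root_.zpow_neg, hTz, hTz, hUn,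
      Matrix.mul_fin_two, Matrix.mul_fin_two]
    simp only [mul_zero, zero_mul, add_zero, zero_add]
  have hWinv : ∀ k, ((W k)⁻¹).val =
      !![lam^(m k) * pN (n₁+k) * lam^(-(m k)), lam^(m k) * qN (n₁+k) * mu^(-(m k));
         mu^(m k) * rN (n₁+k) * lam^(-(m k)), mu^(m k) * sN (n₁+k) * mu^(-(m k))] := by
    intro k
    have h7 : (W k)⁻¹ = UT^(m k) * (U (n₁+k))⁻¹ * (UT^(m k))⁻¹ := by
      rw [hW k]; group
    rw [h7, Units.val_mul, Units.val_mul, ← _root_.zpow_neg, hTz, hTz, hPn,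
      Matrix.mul_fin_two, Matrix.mul_fin_two]
    simp only [mul_zero, zero_mul, add_zero, zero_add]
  have hmemW : ∀ k, W k ∈ Subgroup.closure ({US,UT} : Set (Matrix (Fin 2) (Fin 2) ℍ[ℝ])ˣ) := by
    intro k
    rw [hW k]
    exact mul_mem (mul_mem (zpow_mem hUTmem _) (hUmem _)) (inv_mem (zpow_mem hUTmem _))
  have hyW : ∀ k, ‖(W k).val 0 1‖ * ‖(W k).val 1 0‖ = y k := by
    intro k
    have e01 : (W k).val 0 1 = lam^(m k) * bN (n₁+k) * mu^(-(m k)) := by rw [hWval k]; simp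
    have e10 : (W k).val 1 0 = mu^(m k) * cN (n₁+k) * lam^(-(m k)) := by rw [hWval k]; simp
    rw [e01, e10, hcross1, hcross2, hy k, hxdef]
    have ht0' : (‖lam‖^((2:ℤ)*(m k))) ≠ 0 := (zpow_pos htpos _).ne'
    field_simp
  have hRall : ∀ k (i j : Fin 2),
      ‖(W k).val i j‖ ≤ RA + RD + Rβ + Rγ ∧ ‖((W k)⁻¹).val i j‖ ≤ RA + RD + Rβ + Rγ := by
    intro k i j
    have hsA : ‖sN (n₁+k)‖ = ‖aN (n₁+k)‖ := (hstepAll (n₁+k)).1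
    have hpD : ‖pN (n₁+k)‖ = ‖dN (n₁+k)‖ := (hstepAll (n₁+k)).2.1
    have hqB : ‖qN (n₁+k)‖ = ‖bN (n₁+k)‖ := (hstepAll (n₁+k)).2.2.1
    have hrC : ‖rN (n₁+k)‖ = ‖cN (n₁+k)‖ := (hstepAll (n₁+k)).2.2.2.1
    have n00 : ‖(W k).val 0 0‖ ≤ RA + RD + Rβ + Rγ := by
      have e : (W k).val 0 0 = lam^(m k) * aN (n₁+k) * lam^(-(m k)) := by rw [hWval k]; simp
      rw [e, hconj1]
      linarith [hRAb (n₁+k)]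
    have n01 : ‖(W k).val 0 1‖ ≤ RA + RD + Rβ + Rγ := by
      have e : (W k).val 0 1 = lam^(m k) * bN (n₁+k) * mu^(-(m k)) := by rw [hWval k]; simp
      rw [e, hcross1]
      linarith [hβk k]
    have n10 : ‖(W k).val 1 0‖ ≤ RA + RD + Rβ + Rγ := by
      have e : (W k).val 1 0 = mu^(m k) * cN (n₁+k) * lam^(-(m k)) := by rw [hWval k]; simp
      rw [e, hcross2]
      linarith [hγk k]
    have n11 : ‖(W k).val 1 1‖ ≤ RA + RD + Rβ + Rγ := by
      have e : (W k).val 1 1 = mu^(m k) * dN (n₁+k) * mu^(-(m k)) := by rw [hWval k]; simp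
      rw [e, hconj2]
      linarith [hRDb (n₁+k)]
    have i00 : ‖((W k)⁻¹).val 0 0‖ ≤ RA + RD + Rβ + Rγ := by
      have e : ((W k)⁻¹).val 0 0 = lam^(m k) * pN (n₁+k) * lam^(-(m k)) := by rw [hWinv k]; simp
      rw [e, hconj1, hpD]
      linarith [hRDb (n₁+k)]
    have i01 : ‖((W k)⁻¹).val 0 1‖ ≤ RA + RD + Rβ + Rγ := by
      have e : ((W k)⁻¹).val 0 1 = lam^(m k) * qN (n₁+k) * mu^(-(m k)) := by rw [hWinv k]; simp
      rw [e, hcross1, hqB]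
      linarith [hβk k]
    have i10 : ‖((W k)⁻¹).val 1 0‖ ≤ RA + RD + Rβ + Rγ := by
      have e : ((W k)⁻¹).val 1 0 = mu^(m k) * rN (n₁+k) * lam^(-(m k)) := by rw [hWinv k]; simp
      rw [e, hcross2, hrC]
      linarith [hγk k]
    have i11 : ‖((W k)⁻¹).val 1 1‖ ≤ RA + RD + Rβ + Rγ := by
      have e : ((W k)⁻¹).val 1 1 = mu^(m k) * sN (n₁+k) * mu^(-(m k)) := by rw [hWinv k]; simp
      rw [e, hconj2, hsA]
      linarith [hRAb (n₁+k)]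
    constructor
    · fin_cases i <;> fin_cases j
      · exact n00
      · exact n01
      · exact n10
      · exact n11
    · fin_cases i <;> fin_cases j
      · exact i00
      · exact i01
      · exact i10
      · exact i11
  exact tail_endgame US UT hdisc W hmemW y hyanti hyW (RA + RD + Rβ + Rγ) hRall

end JorgensenAux
end

section
/- Let S = !![a,b;c,d] and T = !![λ,0;0,μ] be 2×2 quaternionic matrices with α_S = 1 and |λ| = |μ| = 1. Let α = arg λ, β = arg μ, and K := (Re λ − Re μ)² + (|Im λ| + |Im μ|)². If the extremal equality K·(1 + |b·c|) = 1 holds, then ||a·d| − 1| ≤ cot²((α + β)/2) − 3. -/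
open Matrix Quaternion
open scoped Quaternion

lemma quat_re_im_sq (q : ℍ[ℝ]) : q.re ^ 2 + ‖q.im‖ ^ 2 = ‖q‖ ^ 2 := by
  have h1 : ‖q‖ ^ 2 = Quaternion.normSq q := by
    rw [sq, ← Quaternion.normSq_eq_norm_mul_self]
  have h2 : ‖q.im‖ ^ 2 = Quaternion.normSq q.im := by
    rw [sq, ← Quaternion.normSq_eq_norm_mul_self]
  rw [h1, h2, Quaternion.normSq_def', Quaternion.normSq_def']
  simp
  ring

lemma quat_abs_re_le_norm (q : ℍ[ℝ]) : |q.re| ≤ ‖q‖ := by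
  have h := quat_re_im_sq q
  have h2 : q.re ^ 2 ≤ ‖q‖ ^ 2 := by linarith [sq_nonneg ‖q.im‖]
  rw [← Real.sqrt_sq_eq_abs, ← Real.sqrt_sq (norm_nonneg q)]
  exact Real.sqrt_le_sqrt h2

set_option maxHeartbeats 1000000 in
/-- computational consequence of the extremal equality:
`||ad| − 1| ≤ cot²((α+β)/2) − 3`. -/
theorem quaternion_extreme_ad_bound (a b c d lam mu : ℍ[ℝ])
    (S T : Matrix (Fin 2) (Fin 2) ℍ[ℝ])
    (hS : S = !![a, b; c, d]) (hT : T = !![lam, 0; 0, mu])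
    (hαS : ‖a‖ ^ 2 * ‖d‖ ^ 2 + ‖b‖ ^ 2 * ‖c‖ ^ 2 - 2 * (a * star c * d * star b).re = 1)
    (hlam : ‖lam‖ = 1) (hmu : ‖mu‖ = 1)
    (α β : ℝ)
    (hα : α = Real.arccos (lam.re / ‖lam‖))
    (hβ : β = Real.arccos (mu.re / ‖mu‖))
    (hext : ((lam.re - mu.re) ^ 2 + (‖lam.im‖ + ‖mu.im‖) ^ 2) * (1 + ‖b * c‖) = 1) :
    |‖a * d‖ - 1| ≤ Real.cot ((α + β) / 2) ^ 2 - 3 := by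
  clear hS hT S T
  have hlre : lam.re ^ 2 + ‖lam.im‖ ^ 2 = 1 := by
    have := quat_re_im_sq lam; rw [hlam] at this; simpa using this
  have hmre : mu.re ^ 2 + ‖mu.im‖ ^ 2 = 1 := by
    have := quat_re_im_sq mu; rw [hmu] at this; simpa using this
  have hlim : (0:ℝ) ≤ ‖lam.im‖ := norm_nonneg _
  have hmim : (0:ℝ) ≤ ‖mu.im‖ := norm_nonneg _
  have hl1 : |lam.re| ≤ 1 := by have := quat_abs_re_le_norm lam; rwa [hlam] at this
  have hm1 : |mu.re| ≤ 1 := by have := quat_abs_re_le_norm mu; rwa [hmu] at this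
  have hcosα : Real.cos α = lam.re := by
    rw [hα, hlam, div_one, Real.cos_arccos (abs_le.1 hl1).1 (abs_le.1 hl1).2]
  have hcosβ : Real.cos β = mu.re := by
    rw [hβ, hmu, div_one, Real.cos_arccos (abs_le.1 hm1).1 (abs_le.1 hm1).2]
  have hsinα : Real.sin α = ‖lam.im‖ := by
    rw [hα, hlam, div_one, Real.sin_arccos]
    rw [show (1:ℝ) - lam.re ^ 2 = ‖lam.im‖ ^ 2 by linarith]
    exact Real.sqrt_sq hlim
  have hsinβ : Real.sin β = ‖mu.im‖ := by
    rw [hβ, hmu, div_one, Real.sin_arccos]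
    rw [show (1:ℝ) - mu.re ^ 2 = ‖mu.im‖ ^ 2 by linarith]
    exact Real.sqrt_sq hmim
  set K : ℝ := (lam.re - mu.re) ^ 2 + (‖lam.im‖ + ‖mu.im‖) ^ 2 with hK
  have hKcos : K = 2 - 2 * Real.cos (α + β) := by
    rw [Real.cos_add, hcosα, hcosβ, hsinα, hsinβ, hK]
    linear_combination hlre + hmre
  set Y : ℝ := ‖b * c‖ with hY
  have hYnn : (0:ℝ) ≤ Y := norm_nonneg _
  have hKpos : 0 < K := by
    have h1 : (0:ℝ) < 1 + Y := by linarith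
    have h2 : K = 1 / (1 + Y) := by rw [eq_div_iff h1.ne']; exact hext
    rw [h2]; positivity
  set θ : ℝ := (α + β) / 2 with hθ
  have h2θ : α + β = 2 * θ := by rw [hθ]; ring
  have hcos2θ : Real.cos (α + β) = 2 * Real.cos θ ^ 2 - 1 := by
    rw [h2θ, Real.cos_two_mul]
  have hpyth := Real.sin_sq_add_cos_sq θ
  have hsinθsq : Real.sin θ ^ 2 = K / 4 := by
    rw [hKcos, hcos2θ]; linarith
  have hcot : Real.cot θ ^ 2 = 3 + 4 * Y := by
    have hs2 : Real.sin θ ^ 2 ≠ 0 := by rw [hsinθsq]; positivity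
    rw [Real.cot_eq_cos_div_sin, div_pow, div_eq_iff hs2]
    have hcossq : Real.cos θ ^ 2 = 1 - K / 4 := by linarith
    rw [hcossq, hsinθsq]
    linear_combination -hext
  rw [hcot]
  have hre : |(a * star c * d * star b).re| ≤ ‖a‖ * ‖c‖ * ‖d‖ * ‖b‖ := by
    calc |(a * star c * d * star b).re| ≤ ‖a * star c * d * star b‖ :=
          quat_abs_re_le_norm _
      _ = ‖a‖ * ‖c‖ * ‖d‖ * ‖b‖ := by
          rw [norm_mul, norm_mul, norm_mul, Quaternion.norm_star, Quaternion.norm_star]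
  have had : ‖a * d‖ = ‖a‖ * ‖d‖ := norm_mul a d
  have hbc : Y = ‖b‖ * ‖c‖ := norm_mul b c
  have hX : (0:ℝ) ≤ ‖a‖ * ‖d‖ := by positivity
  have hprod : ‖a‖ * ‖c‖ * ‖d‖ * ‖b‖ = (‖a‖ * ‖d‖) * (‖b‖ * ‖c‖) := by ring
  rw [hprod] at hre
  have habs := abs_le.1 hre
  set X : ℝ := ‖a‖ * ‖d‖ with hXdef
  set Z : ℝ := ‖b‖ * ‖c‖ with hZdef
  have hZnn : (0:ℝ) ≤ Z := by rw [hbc] at hYnn; exact hYnn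
  have hαS' : X ^ 2 + Z ^ 2 - 2 * (a * star c * d * star b).re = 1 := by
    rw [hXdef, hZdef]; linear_combination hαS
  have hupper : X - 1 ≤ Z := by
    have h2 : (X - Z) ^ 2 ≤ 1 := by
      have : (X - Z) ^ 2 = X ^ 2 + Z ^ 2 - 2 * (X * Z) := by ring
      linarith [habs.2]
    have h3 : |X - Z| ≤ 1 := (sq_le_one_iff_abs_le_one _).1 h2
    linarith [(abs_le.1 h3).2]
  have hlower : 1 - X ≤ Z := by
    have h2 : (1:ℝ) ≤ (X + Z) ^ 2 := by
      have : (X + Z) ^ 2 = X ^ 2 + Z ^ 2 + 2 * (X * Z) := by ring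
      linarith [habs.1]
    have h4 : (1:ℝ) ≤ |X + Z| := (one_le_sq_iff_one_le_abs _).1 h2
    rw [abs_of_nonneg (by positivity : (0:ℝ) ≤ X + Z)] at h4
    linarith
  have h1 : |‖a * d‖ - 1| ≤ Y := by
    rw [abs_le, had, hbc]
    exact ⟨by linarith, by linarith⟩
  linarith
end

section
/- Let S = !![a,b;c,d] and T = !![λ,η;0,μ] be 2×2 quaternionic matrices with α_S = 1, Re λ = Re μ, |λ| ≤ 1 ≤ |μ|, |λ|·|μ| = 1 and c ≠ 0, and suppose S(λ,μ) := |μ|·(|Im λ| + |Im μ|) ≤ 1/(4√2). Set τ₀ := λ·(−c⁻¹·d) + η + (c⁻¹·d)·μ, t₀ := λ·(a·c⁻¹) + η − (a·c⁻¹)·μ, and κ₀ := (1 + √(1 − 4√2·S(λ,μ)))/2. If the extremal equality |c|·√(|τ₀|·|t₀|) = κ₀ holds, then |τ₀ − t₀| ≤ |conj(c)·d + a·conj(c)|·|τ₀|·|t₀| (equivalently, |τ₀ − t₀|/|τ₀·t₀| ≤ |conj(c)·d + a·conj(c)|). -/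
open Matrix Quaternion
open scoped Quaternion

set_option maxHeartbeats 800000 in
/-- computational criterion for extremality in the triangular case:
if `|c|·√(|τ₀||t₀|) = κ₀` then `|τ₀ − t₀| ≤ |c̄d + ac̄|·|τ₀||t₀|`. -/
theorem quaternion_extreme_triangular_bound (a b c d lam mu eta : ℍ[ℝ])
    (S T : Matrix (Fin 2) (Fin 2) ℍ[ℝ])
    (hS : S = !![a, b; c, d]) (hT : T = !![lam, eta; 0, mu])
    (hαS : ‖a‖ ^ 2 * ‖d‖ ^ 2 + ‖b‖ ^ 2 * ‖c‖ ^ 2 - 2 * (a * star c * d * star b).re = 1)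
    (hre : lam.re = mu.re)
    (hlam : ‖lam‖ ≤ 1) (hmu : 1 ≤ ‖mu‖) (hdetT : ‖lam‖ * ‖mu‖ = 1)
    (hc : c ≠ 0)
    (hSmall : ‖mu‖ * (‖lam.im‖ + ‖mu.im‖) ≤ 1 / (4 * Real.sqrt 2))
    (τ₀ t₀ : ℍ[ℝ])
    (hτ₀ : τ₀ = lam * (-(c⁻¹ * d)) + eta + (c⁻¹ * d) * mu)
    (ht₀ : t₀ = lam * (a * c⁻¹) + eta - (a * c⁻¹) * mu)
    (κ₀ : ℝ)
    (hκ₀ : κ₀ = (1 + Real.sqrt (1 - 4 * Real.sqrt 2 * (‖mu‖ * (‖lam.im‖ + ‖mu.im‖)))) / 2)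
    (hext : ‖c‖ * Real.sqrt (‖τ₀‖ * ‖t₀‖) = κ₀) :
    ‖τ₀ - t₀‖ ≤ ‖star c * d + a * star c‖ * (‖τ₀‖ * ‖t₀‖) := by
  obtain ⟨u, hu⟩ : ∃ u : ℍ[ℝ], u = c⁻¹ * d + a * c⁻¹ := ⟨_, rfl⟩
  -- rewrite the right-hand norm
  have e1 : star c * d = ((normSq c : ℝ) : ℍ[ℝ]) * (c⁻¹ * d) := by
    rw [← Quaternion.star_mul_self c, mul_assoc, ← mul_assoc c c⁻¹ d,
      mul_inv_cancel₀ hc, one_mul]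
  have e2 : a * star c = (a * c⁻¹) * ((normSq c : ℝ) : ℍ[ℝ]) := by
    rw [← Quaternion.self_mul_star c, ← mul_assoc, mul_assoc a, inv_mul_cancel₀ hc, mul_one]
  have hkey : star c * d + a * star c = ((normSq c : ℝ) : ℍ[ℝ]) * u := by
    rw [e1, e2, hu, mul_add, Quaternion.coe_commutes (normSq c) (a * c⁻¹)]
  have hnormkey : ‖star c * d + a * star c‖ = ‖c‖ ^ 2 * ‖u‖ := by
    rw [hkey, norm_mul, Quaternion.norm_coe, Real.norm_of_nonneg Quaternion.normSq_nonneg,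
      Quaternion.normSq_eq_norm_mul_self, sq]
  -- rewrite the difference
  obtain ⟨p, hp⟩ : ∃ p : ℍ[ℝ], p = lam.im := ⟨_, rfl⟩
  obtain ⟨q, hq⟩ : ∃ q : ℍ[ℝ], q = mu.im := ⟨_, rfl⟩
  obtain ⟨r, hr⟩ : ∃ r : ℝ, r = mu.re := ⟨_, rfl⟩
  have hl : lam = ((r : ℝ) : ℍ[ℝ]) + p := by
    rw [hp, hr, ← hre]; exact (Quaternion.re_add_im lam).symm
  have hm : mu = ((r : ℝ) : ℍ[ℝ]) + q := by
    rw [hq, hr]; exact (Quaternion.re_add_im mu).symm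
  have hdiff' : τ₀ - t₀ = u * q - p * u := by
    have h1 : τ₀ - t₀ = -(lam * u) + u * mu := by rw [hτ₀, ht₀, hu]; noncomm_ring
    rw [h1, hl, hm, add_mul, mul_add, Quaternion.coe_commutes r u]
    abel
  have hdiff : τ₀ - t₀ = u * mu.im - lam.im * u := by rw [hdiff', hp, hq]
  -- bound the LHS
  have hLHS : ‖τ₀ - t₀‖ ≤ ‖u‖ * (‖lam.im‖ + ‖mu.im‖) := by
    rw [hdiff]
    calc ‖u * mu.im - lam.im * u‖ ≤ ‖u * mu.im‖ + ‖lam.im * u‖ := norm_sub_le _ _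
      _ = ‖u‖ * (‖lam.im‖ + ‖mu.im‖) := by rw [norm_mul, norm_mul]; ring
  -- numeric bounds
  have hsum0 : (0 : ℝ) ≤ ‖lam.im‖ + ‖mu.im‖ := by positivity
  have hsqrt2 : (1 : ℝ) ≤ Real.sqrt 2 := by
    nlinarith [Real.sq_sqrt (by norm_num : (0:ℝ) ≤ 2), Real.sqrt_nonneg 2]
  have hs : ‖lam.im‖ + ‖mu.im‖ ≤ 1 / 4 := by
    have h1 : ‖lam.im‖ + ‖mu.im‖ ≤ ‖mu‖ * (‖lam.im‖ + ‖mu.im‖) :=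
      le_mul_of_one_le_left hsum0 hmu
    have h2 : (1 : ℝ) / (4 * Real.sqrt 2) ≤ 1 / 4 := by
      apply one_div_le_one_div_of_le <;> nlinarith
    linarith
  have hκ : (1 / 2 : ℝ) ≤ κ₀ := by
    rw [hκ₀]
    have := Real.sqrt_nonneg (1 - 4 * Real.sqrt 2 * (‖mu‖ * (‖lam.im‖ + ‖mu.im‖)))
    linarith
  have hκsq : (1 / 4 : ℝ) ≤ κ₀ ^ 2 := by nlinarith
  have hprod : κ₀ ^ 2 = ‖c‖ ^ 2 * (‖τ₀‖ * ‖t₀‖) := by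
    rw [← hext, mul_pow, Real.sq_sqrt (by positivity)]
  rw [hnormkey]
  have hu0 : (0 : ℝ) ≤ ‖u‖ := norm_nonneg u
  nlinarith [mul_le_mul_of_nonneg_left hs hu0, mul_le_mul_of_nonneg_left hκsq hu0]
end
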